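/- arXiv:1411.5216 — 5 statements merged into one kernel-verified Lean document; each statement's English description precedes it below -/
import Mathlib

section
/- The integral over the triangle {(x,y) : 0<x<π, 0<y<π, x+y<π} of 8·sin(x)·sin(y)·sin(x+y)/(sin(x)+sin(y)+sin(x+y))^3 equals 1. -/
open MeasureTheory Real

open Filter Topology Set intervalIntegral


lemma pyth_tan {s ca sa : ℝ} (h : sa = s * ca) (p : sa^2 + ca^2 = 1) :
    ca^2 * (1 + s^2) = 1 := by subst h; ring_nf; ring_nf at p; linarith

lemma alg_S (sa ca sb cb s t : ℝ) (ea : sa = s * ca) (eb : sb = t * cb)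
    (pa : ca^2 * (1+s^2) = 1) (pb : cb^2 * (1+t^2) = 1) :
    2*sa*ca + 2*sb*cb + 2*(sa*cb+ca*sb)*(ca*cb - sa*sb)
      = 4*(s+t)*ca^2*cb^2 := by
  subst ea eb
  linear_combination (-2*t*cb^2) * pa + (-2*s*ca^2) * pb

lemma alg_core' (s t u v : ℝ) (hu : u * (1+s^2) = 1) (hv : v * (1+t^2) = 1) (hst : s+t ≠ 0) :
    8*(2*s*u)*(2*t*v)*(2*(s+t)*(1-s*t)*u*v) / (4*(s+t)*u*v)^3
      = s*t*(1-s*t)*(1+s^2)*(1+t^2)/(s+t)^2 := by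
  have h1 : (1:ℝ)+s^2 ≠ 0 := by positivity
  have h2 : (1:ℝ)+t^2 ≠ 0 := by positivity
  have hu' : u = 1/(1+s^2) := by field_simp; linarith [hu]
  have hv' : v = 1/(1+t^2) := by field_simp; linarith [hv]
  subst hu' hv'
  field_simp
  ring

lemma alg_core (sa ca sb cb s t : ℝ) (hca : ca ≠ 0) (hcb : cb ≠ 0)
    (ea : sa = s * ca) (eb : sb = t * cb)
    (pa : sa^2 + ca^2 = 1) (pb : sb^2 + cb^2 = 1)
    (hst : s + t ≠ 0) :
    8 * (2*sa*ca) * (2*sb*cb) * (2*(sa*cb+ca*sb)*(ca*cb - sa*sb)) /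
      (2*sa*ca + 2*sb*cb + 2*(sa*cb+ca*sb)*(ca*cb - sa*sb))^3
      = s*t*(1-s*t)*(1+s^2)*(1+t^2)/(s+t)^2 := by
  have pa' := pyth_tan ea pa
  have pb' := pyth_tan eb pb
  rw [alg_S sa ca sb cb s t ea eb pa' pb']
  have e1 : 2*sa*ca = 2*s*(ca^2) := by subst ea; ring
  have e2 : 2*sb*cb = 2*t*(cb^2) := by subst eb; ring
  have e3 : 2*(sa*cb+ca*sb)*(ca*cb - sa*sb) = 2*(s+t)*(1-s*t)*(ca^2)*(cb^2) := by
    subst ea eb; ring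
  rw [e1, e2, e3]
  exact alg_core' s t (ca^2) (cb^2) pa' pb' hst

lemma key_identity {x y : ℝ} (hx : 0 < x) (hxp : x < π) (hy : 0 ≤ y) (hxy : x + y ≤ π) :
    8 * sin x * sin y * sin (x+y) / (sin x + sin y + sin (x+y))^3
      = tan (x/2) * tan (y/2) * (1 - tan (x/2) * tan (y/2)) * (1 + tan (x/2)^2)
          * (1 + tan (y/2)^2) / (tan (x/2) + tan (y/2))^2 := by
  have pi_pos := Real.pi_pos
  set a := x/2 with ha
  set b := y/2 with hb
  have hca : 0 < cos a := Real.cos_pos_of_mem_Ioo ⟨by simp [ha]; linarith, by simp [ha]; linarith⟩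
  have hcb : 0 < cos b := Real.cos_pos_of_mem_Ioo ⟨by simp [hb]; linarith, by simp [hb]; linarith⟩
  have hsa : 0 < sin a := Real.sin_pos_of_pos_of_lt_pi (by simp [ha]; linarith) (by simp [ha]; linarith)
  have hsb : 0 ≤ sin b := Real.sin_nonneg_of_nonneg_of_le_pi (by simp [hb]; linarith) (by simp [hb]; linarith)
  have ea : sin a = tan a * cos a := by rw [tan_eq_sin_div_cos]; field_simp
  have eb : sin b = tan b * cos b := by rw [tan_eq_sin_div_cos]; field_simp
  have hst : 0 < tan a + tan b := by
    have : 0 < tan a := by rw [tan_eq_sin_div_cos]; exact div_pos hsa hca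
    have htb : 0 ≤ tan b := by rw [tan_eq_sin_div_cos]; positivity
    linarith
  have h2a : x = 2*a := by rw [ha]; ring
  have h2b : y = 2*b := by rw [hb]; ring
  have hsx : sin x = 2*sin a*cos a := by rw [h2a, Real.sin_two_mul]
  have hsy : sin y = 2*sin b*cos b := by rw [h2b, Real.sin_two_mul]
  have hsxy : sin (x+y) = 2*(sin a*cos b+cos a*sin b)*(cos a*cos b - sin a*sin b) := by
    have h2ab : x + y = 2*(a+b) := by rw [h2a, h2b]; ring
    rw [h2ab, Real.sin_two_mul, Real.sin_add, Real.cos_add]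
  rw [hsx, hsy, hsxy]
  exact alg_core (sin a) (cos a) (sin b) (cos b) (tan a) (tan b) hca.ne' hcb.ne'
    ea eb (Real.sin_sq_add_cos_sq a) (Real.sin_sq_add_cos_sq b) hst.ne'
noncomputable def Bfun (s t : ℝ) : ℝ :=
  -s^2*(s+t) + (s+2*s^3) * Real.log (s+t) + s^2*(1+s^2)/(s+t)

lemma Bfun_hasDeriv (s : ℝ) {t : ℝ} (h : 0 < s + t) :
    HasDerivAt (Bfun s) (s*t*(1-s*t)/(s+t)^2) t := by
  have h1 : HasDerivAt (fun t : ℝ => s + t) 1 t := (hasDerivAt_id t).const_add s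
  have h2 : HasDerivAt (fun t : ℝ => -s^2*(s+t)) (-s^2*1) t := h1.const_mul _
  have h3 : HasDerivAt (fun t : ℝ => (s+2*s^3) * Real.log (s+t))
      ((s+2*s^3) * (1/(s+t))) t := (h1.log h.ne').const_mul _
  have h4 : HasDerivAt (fun t : ℝ => s^2*(1+s^2)*(s+t)⁻¹)
      (s^2*(1+s^2) * (-1/(s+t)^2)) t := (h1.inv h.ne').const_mul _
  have h5 := (h2.add h3).add h4
  have he : Bfun s = fun t => -s^2*(s+t) + (s+2*s^3) * Real.log (s+t) + s^2*(1+s^2)*(s+t)⁻¹ := by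
    funext u; simp [Bfun, div_eq_mul_inv]
  rw [he]
  refine h5.congr_deriv ?_
  field_simp
  ring

lemma tan_half_hasDeriv {y : ℝ} (h1 : -π < y) (h2 : y < π) :
    HasDerivAt (fun y : ℝ => tan (y/2)) ((1 + tan (y/2)^2)/2) y := by
  have hc : cos (y/2) ≠ 0 := by
    apply (Real.cos_pos_of_mem_Ioo ⟨by linarith, by linarith⟩).ne'
  have ht := (Real.hasDerivAt_tan hc).comp y ((hasDerivAt_id y).div_const 2)
  refine ht.congr_deriv ?_
  rw [← Real.inv_one_add_tan_sq hc]
  have h4 : (1:ℝ) + tan (y/2)^2 ≠ 0 := by positivity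
  field_simp

lemma inner_deriv {x y : ℝ} (hx : 0 < x) (hxp : x < π) (hy : 0 ≤ y) (hxy : x + y ≤ π) :
    HasDerivAt (fun y : ℝ => 2*(1+tan (x/2)^2) * Bfun (tan (x/2)) (tan (y/2)))
      (8 * sin x * sin y * sin (x+y) / (sin x + sin y + sin (x+y))^3) y := by
  have pi_pos := Real.pi_pos
  set s := tan (x/2) with hs
  set t := tan (y/2) with ht
  have hspos : 0 < s := Real.tan_pos_of_pos_of_lt_pi_div_two (by linarith) (by linarith)
  have htnn : 0 ≤ t := Real.tan_nonneg_of_nonneg_of_le_pi_div_two (by linarith) (by linarith)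
  have hst : 0 < s + t := by linarith
  have hB := ((Bfun_hasDeriv s hst).comp y (tan_half_hasDeriv (by linarith) (by linarith))).const_mul
      (2*(1+s^2))
  rw [key_identity hx hxp hy hxy]
  refine hB.congr_deriv ?_
  rw [← hs, ← ht]
  ring

lemma inner_integral {x : ℝ} (hx : 0 < x) (hxp : x < π) :
    ∫ y in (0:ℝ)..(π - x), 8*sin x*sin y*sin (x+y)/(sin x+sin y+sin (x+y))^3
      = 2*(1+tan (x/2)^2) * (Bfun (tan (x/2)) (tan (x/2))⁻¹ - Bfun (tan (x/2)) 0) := by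
  have pi_pos := Real.pi_pos
  have hle : (0:ℝ) ≤ π - x := by linarith
  have hFTC := intervalIntegral.integral_eq_sub_of_hasDerivAt
    (f := fun y : ℝ => 2*(1+tan (x/2)^2) * Bfun (tan (x/2)) (tan (y/2)))
    (f' := fun y => 8*sin x*sin y*sin (x+y)/(sin x+sin y+sin (x+y))^3)
    (a := 0) (b := π - x) ?hd ?hi
  · rw [hFTC]
    have h1 : (π - x)/2 = π/2 - x/2 := by ring
    rw [h1, Real.tan_pi_div_two_sub]
    norm_num
    ring
  case hd =>
    intro y hy
    rw [Set.uIcc_of_le hle] at hy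
    exact inner_deriv hx hxp hy.1 (by linarith [hy.2])
  case hi =>
    apply ContinuousOn.intervalIntegrable
    apply ContinuousOn.div
    · fun_prop
    · fun_prop
    · intro y hy
      rw [Set.uIcc_of_le hle] at hy
      have h1 : 0 < sin x := Real.sin_pos_of_pos_of_lt_pi hx hxp
      have h2 : 0 ≤ sin y := Real.sin_nonneg_of_nonneg_of_le_pi hy.1 (by linarith [hy.2])
      have h3 : 0 ≤ sin (x+y) := Real.sin_nonneg_of_nonneg_of_le_pi (by linarith [hy.1]) (by linarith [hy.2])
      positivity
noncomputable def Gfun (s : ℝ) : ℝ :=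
  s^2*(1+s^2)/2 * (Real.log (s+s⁻¹) - Real.log s) - s^2/2

lemma Bdiff {s : ℝ} (hs : 0 < s) :
    Bfun s s⁻¹ - Bfun s 0 = -2*s + (s+2*s^3) * (Real.log (s+s⁻¹) - Real.log s) := by
  have hss : 0 < s + s⁻¹ := by positivity
  simp only [Bfun, add_zero]
  have h1 : s^2*(1+s^2)/(s+s⁻¹) = s^3 := by
    rw [div_eq_iff hss.ne']; field_simp; ring
  have h2 : s^2*(1+s^2)/s = s*(1+s^2) := by
    rw [div_eq_iff hs.ne']; ring
  rw [h1, h2]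
  have h3 : s^2*s⁻¹ = s := by field_simp
  ring_nf
  rw [h3]
  ring

lemma Gfun_hasDeriv {s : ℝ} (hs : 0 < s) :
    HasDerivAt Gfun (-2*s + (s+2*s^3) * (Real.log (s+s⁻¹) - Real.log s)) s := by
  have hss : 0 < s + s⁻¹ := by positivity
  have h1 : HasDerivAt (fun s : ℝ => s + s⁻¹) (1 + (-1/s^2)) s := by
    have := ((hasDerivAt_id s).inv hs.ne')
    exact (hasDerivAt_id s).add this
  have hL : HasDerivAt (fun s : ℝ => Real.log (s+s⁻¹) - Real.log s)
      ((1 + (-1/s^2))/(s+s⁻¹) - s⁻¹) s :=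
    (h1.log hss.ne').sub (Real.hasDerivAt_log hs.ne')
  have hu : HasDerivAt (fun s : ℝ => s^2*(1+s^2)/2) (s + 2*s^3) s := by
    have hp : HasDerivAt (fun s : ℝ => s^2*(1+s^2)/2)
        (((2:ℕ)*s^1*(1+s^2) + s^2*((2:ℕ)*s^1))/2) s := by
      exact (((hasDerivAt_pow 2 s).mul ((hasDerivAt_pow 2 s).const_add 1)).div_const 2)
    convert hp using 1; push_cast; ring
  have hm := hu.mul hL
  have hq : HasDerivAt (fun s : ℝ => s^2/2) s s := by
    have := (hasDerivAt_pow 2 s).div_const 2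
    refine this.congr_deriv ?_; push_cast; ring
  have := hm.sub hq
  refine this.congr_deriv ?_
  field_simp
  ring
lemma log_sq_tendsto : Tendsto (fun s : ℝ => Real.log s * s^2) (𝓝[>] (0:ℝ)) (𝓝 0) := by
  have h := tendsto_log_mul_rpow_nhdsGT_zero (r := 2) (by norm_num)
  apply h.congr'
  filter_upwards [self_mem_nhdsWithin] with s hs
  norm_cast

lemma Gfun_tendsto_zero : Tendsto Gfun (𝓝[>] (0:ℝ)) (𝓝 0) := by
  apply squeeze_zero_norm' (a := fun s => s^2*(1+s^2)/2 * (Real.log 2 - 2*Real.log s) + s^2/2)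
  · filter_upwards [Ioo_mem_nhdsGT_of_mem (Set.mem_Ico.2 ⟨le_refl (0:ℝ), one_pos⟩)] with s hs
    obtain ⟨hs0, hs1⟩ := hs
    have hsi : s ≤ s⁻¹ := by
      rw [show s⁻¹ = 1/s by ring, le_div_iff₀ hs0]
      nlinarith
    have hL0 : 0 ≤ Real.log (s+s⁻¹) - Real.log s := by
      have : s ≤ s + s⁻¹ := le_add_of_nonneg_right (by positivity)
      have := Real.log_le_log hs0 this
      linarith
    have hLub : Real.log (s+s⁻¹) - Real.log s ≤ Real.log 2 - 2*Real.log s := by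
      have h1 : s + s⁻¹ ≤ 2*s⁻¹ := by linarith
      have h2 : Real.log (s+s⁻¹) ≤ Real.log (2*s⁻¹) := Real.log_le_log (by positivity) h1
      rw [Real.log_mul (by norm_num) (by positivity), Real.log_inv] at h2
      linarith
    have hA : (0:ℝ) ≤ s^2*(1+s^2)/2 := by positivity
    simp only [Real.norm_eq_abs, Gfun]
    have : |s^2*(1+s^2)/2 * (Real.log (s+s⁻¹) - Real.log s) - s^2/2|
        ≤ s^2*(1+s^2)/2 * (Real.log (s+s⁻¹) - Real.log s) + s^2/2 := by
      rw [abs_le]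
      constructor
      · nlinarith [mul_nonneg hA hL0]
      · nlinarith [mul_nonneg hA hL0, sq_nonneg s]
    refine this.trans ?_
    have := mul_le_mul_of_nonneg_left hLub hA
    linarith
  · have hc : Tendsto (fun s : ℝ => s^2*(1+s^2)/2 * Real.log 2 + s^2/2 + (-(1+s^2)) * (Real.log s * s^2))
        (𝓝[>] (0:ℝ)) (𝓝 0) := by
      have h1 : Tendsto (fun s : ℝ => s^2*(1+s^2)/2 * Real.log 2 + s^2/2) (𝓝[>] (0:ℝ)) (𝓝 0) := by
        have : ContinuousAt (fun s : ℝ => s^2*(1+s^2)/2 * Real.log 2 + s^2/2) 0 := by fun_prop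
        have h0 := this.tendsto
        simp only [ne_eq, OfNat.ofNat_ne_zero, not_false_eq_true, zero_pow, zero_mul, zero_div,
          add_zero, zero_add] at h0
        norm_num at h0
        exact h0.mono_left nhdsWithin_le_nhds
      have h2 : Tendsto (fun s : ℝ => (-(1+s^2)) * (Real.log s * s^2)) (𝓝[>] (0:ℝ)) (𝓝 0) := by
        have hcon : Tendsto (fun s : ℝ => -(1+s^2)) (𝓝[>] (0:ℝ)) (𝓝 (-(1+0^2))) :=
          ((continuous_const.add (continuous_pow 2)).neg.tendsto 0).mono_left nhdsWithin_le_nhds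
        have := hcon.mul log_sq_tendsto
        simpa using this
      simpa using h1.add h2
    apply hc.congr
    intro s
    ring
lemma phi_tendsto :
    Tendsto (fun r : ℝ => (2*(r+1)*Real.log (1+r) - 2*r)/r^2) (𝓝[>] (0:ℝ)) (𝓝 1) := by
  have key : Tendsto (fun r : ℝ => (2*(r+1)*Real.log (1+r) - 2*r)/r^2 - 1) (𝓝[>] (0:ℝ)) (𝓝 0) := by
    apply squeeze_zero_norm' (a := fun r => 7*r)
    · filter_upwards [Ioo_mem_nhdsGT_of_mem (Set.mem_Ico.2 ⟨le_refl (0:ℝ), one_half_pos⟩)] with r hr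
      obtain ⟨hr0, hr1⟩ := hr
      have habs : |(-r)| < 1 := by rw [abs_neg, abs_of_pos hr0]; linarith
      have he := Real.abs_log_sub_add_sum_range_le habs 2
      simp only [Finset.sum_range_succ, Finset.sum_range_zero] at he
      norm_num at he
      rw [abs_of_pos hr0] at he
      set e := Real.log (1+r) - r + r^2/2 with hedef
      have he2 : |e| ≤ 2*r^3 := by
        have hb : r^3/(1-r) ≤ 2*r^3 := by
          rw [div_le_iff₀ (by linarith)]
          nlinarith [pow_pos hr0 3]
        have : |e| ≤ r^3/(1-r) := by
          rw [hedef]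
          convert he using 2
          ring
        linarith
      have heq : (2*(r+1)*Real.log (1+r) - 2*r)/r^2 - 1 = (2*(r+1)*e - r^3)/r^2 := by
        rw [hedef]
        field_simp
        ring
      rw [heq, Real.norm_eq_abs, abs_div, abs_of_pos (by positivity : (0:ℝ) < r^2)]
      rw [div_le_iff₀ (by positivity : (0:ℝ) < r^2)]
      have hnum : |2*(r+1)*e - r^3| ≤ 2*(r+1)*|e| + r^3 := by
        calc |2*(r+1)*e - r^3| ≤ |2*(r+1)*e| + |r^3| := abs_sub _ _
        _ = 2*(r+1)*|e| + r^3 := by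
            rw [abs_mul, abs_of_pos (show (0:ℝ) < 2*(r+1) by linarith),
              abs_of_pos (show (0:ℝ) < r^3 by positivity)]
      have : 2*(r+1)*|e| + r^3 ≤ 7*r^3 := by nlinarith [abs_nonneg e, pow_pos hr0 3]
      nlinarith [pow_pos hr0 3]
    · have hco : Continuous (fun r : ℝ => 7*r) := by fun_prop
      have := hco.tendsto 0
      norm_num at this
      exact this.mono_left nhdsWithin_le_nhds
  have h1 := key.add (tendsto_const_nhds (x := (1:ℝ)) (f := 𝓝[>] (0:ℝ)))
  norm_num at h1
  apply h1.congr
  intro r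
  ring

lemma G_atTop : Tendsto (fun s : ℝ => 4 * Gfun s) atTop (𝓝 1) := by
  have hr : Tendsto (fun s : ℝ => (s^2)⁻¹) atTop (𝓝[>] (0:ℝ)) := by
    apply tendsto_nhdsWithin_of_tendsto_nhds_of_eventually_within
    · exact (tendsto_pow_atTop (two_ne_zero)).inv_tendsto_atTop
    · filter_upwards [eventually_gt_atTop (0:ℝ)] with s hs
      exact Set.mem_Ioi.2 (by positivity)
  have hcomp := phi_tendsto.comp hr
  apply hcomp.congr'
  filter_upwards [eventually_gt_atTop (0:ℝ)] with s hs
  have hs2 : (0:ℝ) < s^2 := by positivity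
  have harg : 1 + (s^2)⁻¹ = (s+s⁻¹)/s := by field_simp
  have hlog : Real.log (1 + (s^2)⁻¹) = Real.log (s+s⁻¹) - Real.log s := by
    rw [harg, Real.log_div (by positivity) hs.ne']
  simp only [Function.comp_apply, Gfun]
  rw [hlog]
  field_simp
  ring
noncomputable def Hfun (x : ℝ) : ℝ := if x < π then 4 * Gfun (Real.tan (x/2)) else 1

lemma Hfun_hasDeriv {x : ℝ} (hx : 0 < x) (hxp : x < π) :
    HasDerivAt Hfun
      (2*(1+tan (x/2)^2) * (Bfun (tan (x/2)) (tan (x/2))⁻¹ - Bfun (tan (x/2)) 0)) x := by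
  have pi_pos := Real.pi_pos
  have hspos : 0 < tan (x/2) := Real.tan_pos_of_pos_of_lt_pi_div_two (by linarith) (by linarith)
  have hd := ((Gfun_hasDeriv hspos).comp x (tan_half_hasDeriv (by linarith) (by linarith))).const_mul 4
  have hev : Hfun =ᶠ[𝓝 x] fun y => 4 * Gfun (tan (y/2)) := by
    filter_upwards [eventually_lt_nhds hxp] with y hy
    simp [Hfun, hy]
  refine HasDerivAt.congr_of_eventuallyEq ?_ hev
  rw [Bdiff hspos]
  refine hd.congr_deriv ?_
  ring

lemma Hfun_pi : Hfun π = 1 := by simp [Hfun]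

lemma Hfun_zero : Hfun 0 = 0 := by
  have : (0:ℝ) < π := Real.pi_pos
  simp [Hfun, this, Gfun]

lemma Hfun_contOn : ContinuousOn Hfun (Icc 0 π) := by
  have pi_pos := Real.pi_pos
  intro x hx
  rcases eq_or_lt_of_le hx.1 with h0 | h0
  · -- x = 0
    subst h0
    rw [← continuousWithinAt_diff_self, ContinuousWithinAt, Hfun_zero]
    have hmaps : Tendsto (fun x : ℝ => tan (x/2)) (𝓝[Icc 0 π \ {0}] 0) (𝓝[>] (0:ℝ)) := by
      rw [tendsto_nhdsWithin_iff]
      constructor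
      · have hct : ContinuousAt Real.tan ((0:ℝ)/2) := by
          rw [show (0:ℝ)/2 = 0 by norm_num]
          exact Real.continuousAt_tan.2 (by simp)
        have hc : ContinuousAt (fun x : ℝ => tan (x/2)) 0 :=
          ContinuousAt.comp (g := Real.tan) (f := fun x : ℝ => x/2) hct
            ((continuous_id.div_const 2).continuousAt)
        have := hc.tendsto
        simp only [zero_div, Real.tan_zero] at this
        exact this.mono_left nhdsWithin_le_nhds
      · filter_upwards [self_mem_nhdsWithin, inter_mem_nhdsWithin _ (Iio_mem_nhds pi_pos)]
          with y hy hy2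
        have hy0 : 0 < y := lt_of_le_of_ne hy.1.1 (by simpa [eq_comm] using hy.2)
        have hyπ : y < π := hy2.2
        exact Set.mem_Ioi.2 (Real.tan_pos_of_pos_of_lt_pi_div_two (by linarith) (by linarith))
    have hG := Gfun_tendsto_zero.comp hmaps
    have : Tendsto (fun x : ℝ => 4 * Gfun (tan (x/2))) (𝓝[Icc 0 π \ {0}] 0) (𝓝 0) := by
      have := hG.const_mul (4:ℝ)
      simpa using this
    apply this.congr'
    filter_upwards [inter_mem_nhdsWithin _ (Iio_mem_nhds pi_pos)] with y hy
    have hyπ : y < π := hy.2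
    simp [Hfun, hyπ]
  · rcases eq_or_lt_of_le hx.2 with hpi | hpi
    · -- x = π
      subst hpi
      rw [← continuousWithinAt_diff_self, ContinuousWithinAt, Hfun_pi]
      have hmaps : Tendsto (fun x : ℝ => tan (x/2)) (𝓝[Icc 0 π \ {π}] π) atTop := by
        have h1 : Tendsto (fun x : ℝ => x/2) (𝓝[<] π) (𝓝[<] (π/2)) := by
          rw [tendsto_nhdsWithin_iff]
          constructor
          · exact ((continuous_id.div_const 2).tendsto π).mono_left nhdsWithin_le_nhds
          · filter_upwards [self_mem_nhdsWithin] with y hy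
            exact Set.mem_Iio.2 (by linarith [Set.mem_Iio.1 hy])
        have h2 := Real.tendsto_tan_pi_div_two.comp h1
        apply h2.mono_left
        apply nhdsWithin_mono
        intro y hy
        exact lt_of_le_of_ne hy.1.2 (by simpa using hy.2)
      have hG := G_atTop.comp hmaps
      apply hG.congr'
      filter_upwards [self_mem_nhdsWithin] with y hy
      have : y < π := lt_of_le_of_ne hy.1.2 (by simpa using hy.2)
      simp [Hfun, this]
    · -- interior
      exact ((Hfun_hasDeriv h0 hpi).continuousAt).continuousWithinAt
lemma amgm3 {a b c : ℝ} (ha : 0 ≤ a) (hb : 0 ≤ b) (hc : 0 ≤ c) :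
    27*(a*b*c) ≤ (a+b+c)^3 := by
  nlinarith [sq_nonneg (a-b), sq_nonneg (b-c), sq_nonneg (a-c), mul_nonneg ha (sq_nonneg (b-c)),
    mul_nonneg hb (sq_nonneg (a-c)), mul_nonneg hc (sq_nonneg (a-b)), mul_nonneg (mul_nonneg ha hb) hc]


/-- The bivariate angle density for triangles from breaking a stick into three
pieces integrates to 1 over its support. -/
theorem angle_density_integrates_to_one :
    ∫ p in {p : ℝ × ℝ | 0 < p.1 ∧ p.1 < π ∧ 0 < p.2 ∧ p.2 < π ∧ p.1 + p.2 < π},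
      8 * sin p.1 * sin p.2 * sin (p.1 + p.2) /
        (sin p.1 + sin p.2 + sin (p.1 + p.2)) ^ 3 = 1 := by
  have pi_pos := Real.pi_pos
  set S : Set (ℝ × ℝ) := {p : ℝ × ℝ | 0 < p.1 ∧ p.1 < π ∧ 0 < p.2 ∧ p.2 < π ∧ p.1 + p.2 < π}
    with hSdef
  set fden : ℝ × ℝ → ℝ := fun p => 8 * sin p.1 * sin p.2 * sin (p.1 + p.2) /
        (sin p.1 + sin p.2 + sin (p.1 + p.2)) ^ 3 with hfden
  have hSopen : IsOpen S := by
    have h1 : IsOpen {p : ℝ × ℝ | 0 < p.1} := isOpen_lt continuous_const continuous_fst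
    have h2 : IsOpen {p : ℝ × ℝ | p.1 < π} := isOpen_lt continuous_fst continuous_const
    have h3 : IsOpen {p : ℝ × ℝ | 0 < p.2} := isOpen_lt continuous_const continuous_snd
    have h4 : IsOpen {p : ℝ × ℝ | p.2 < π} := isOpen_lt continuous_snd continuous_const
    have h5 : IsOpen {p : ℝ × ℝ | p.1 + p.2 < π} :=
      isOpen_lt (continuous_fst.add continuous_snd) continuous_const
    have : S = {p : ℝ × ℝ | 0 < p.1} ∩ ({p : ℝ × ℝ | p.1 < π} ∩ ({p : ℝ × ℝ | 0 < p.2} ∩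
        ({p : ℝ × ℝ | p.2 < π} ∩ {p : ℝ × ℝ | p.1 + p.2 < π}))) := by
      ext p; simp [hSdef, and_assoc]
    rw [this]
    exact h1.inter (h2.inter (h3.inter (h4.inter h5)))
  have hSmeas : MeasurableSet S := hSopen.measurableSet
  -- integrability
  have hIntOn : IntegrableOn fden S volume := by
    apply Measure.integrableOn_of_bounded (M := 8/27)
    · have hsub : S ⊆ Ioo 0 π ×ˢ Ioo 0 π := by
        intro p hp
        exact ⟨⟨hp.1, hp.2.1⟩, ⟨hp.2.2.1, hp.2.2.2.1⟩⟩
      have : volume (Ioo 0 π ×ˢ Ioo 0 π) < ⊤ := by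
        rw [Measure.volume_eq_prod, Measure.prod_prod, Real.volume_Ioo]
        exact ENNReal.mul_lt_top ENNReal.ofReal_lt_top ENNReal.ofReal_lt_top
      exact ((measure_mono hsub).trans_lt this).ne
    · have hm : Measurable fden := by
        apply Measurable.div
        · fun_prop
        · fun_prop
      exact hm.aestronglyMeasurable
    · rw [ae_restrict_iff' hSmeas]
      apply Eventually.of_forall
      intro p hp
      obtain ⟨h1, h2, h3, h4, h5⟩ := hp
      have s1 : 0 < sin p.1 := Real.sin_pos_of_pos_of_lt_pi h1 h2
      have s2 : 0 < sin p.2 := Real.sin_pos_of_pos_of_lt_pi h3 h4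
      have s3 : 0 ≤ sin (p.1 + p.2) :=
        Real.sin_nonneg_of_nonneg_of_le_pi (by linarith) (by linarith)
      have hD : 0 < sin p.1 + sin p.2 + sin (p.1 + p.2) := by linarith
      have hamgm := amgm3 s1.le s2.le s3
      rw [Real.norm_eq_abs, hfden]
      rw [abs_of_nonneg (by positivity)]
      rw [div_le_div_iff₀ (by positivity) (by norm_num)]
      nlinarith [pow_pos hD 3]
  have hInd : Integrable (S.indicator fden) volume :=
    (integrable_indicator_iff hSmeas).2 hIntOn
  have hInd' : Integrable (S.indicator fden) (volume.prod volume) := by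
    rwa [← Measure.volume_eq_prod]
  -- the marginal
  set M : ℝ → ℝ := fun x => ∫ y, S.indicator fden (x, y) with hMdef
  have claim1 : ∀ x ∉ Ioo (0:ℝ) π, M x = 0 := by
    intro x hx
    have : ∀ y : ℝ, S.indicator fden (x, y) = 0 := by
      intro y
      apply Set.indicator_of_notMem
      intro hmem
      exact hx ⟨hmem.1, hmem.2.1⟩
    simp [hMdef, this]
  have claim2 : ∀ x ∈ Ioo (0:ℝ) π,
      M x = 2*(1+tan (x/2)^2) * (Bfun (tan (x/2)) (tan (x/2))⁻¹ - Bfun (tan (x/2)) 0) := by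
    intro x hx
    have hxy : ∀ y : ℝ, S.indicator fden (x, y)
        = (Ioo (0:ℝ) (π - x)).indicator (fun y => fden (x, y)) y := by
      intro y
      by_cases hmem : y ∈ Ioo (0:ℝ) (π - x)
      · rw [Set.indicator_of_mem hmem]
        apply Set.indicator_of_mem
        exact ⟨hx.1, hx.2, hmem.1, by linarith [hmem.2, hx.1], by linarith [hmem.2]⟩
      · rw [Set.indicator_of_notMem hmem]
        apply Set.indicator_of_notMem
        intro hS
        exact hmem ⟨hS.2.2.1, by linarith [hS.2.2.2.2]⟩
    have : M x = ∫ y in Ioo (0:ℝ) (π - x), fden (x, y) := by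
      rw [hMdef]
      simp only [hxy]
      exact MeasureTheory.integral_indicator measurableSet_Ioo
    rw [this, ← integral_Ioc_eq_integral_Ioo,
      ← intervalIntegral.integral_of_le (by linarith [hx.2] : (0:ℝ) ≤ π - x)]
    exact inner_integral hx.1 hx.2
  -- Fubini
  have hfub : ∫ p in S, fden p = ∫ x, M x := by
    rw [← MeasureTheory.integral_indicator hSmeas, Measure.volume_eq_prod,
      MeasureTheory.integral_prod _ hInd']
  have hmarg : Integrable M volume := by
    have := hInd'.integral_prod_left
    exact this
  rw [hfub]
  rw [← setIntegral_eq_integral_of_forall_compl_eq_zero (fun x hx => claim1 x hx)]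
  rw [← integral_Ioc_eq_integral_Ioo, ← intervalIntegral.integral_of_le pi_pos.le]
  have hFTC := intervalIntegral.integral_eq_sub_of_hasDeriv_right_of_le pi_pos.le
    Hfun_contOn (f' := M) ?hd ?hint
  · rw [hFTC, Hfun_pi, Hfun_zero]; ring
  case hd =>
    intro x hx
    rw [claim2 x hx]
    exact (Hfun_hasDeriv hx.1 hx.2).hasDerivWithinAt
  case hint =>
    exact hmarg.intervalIntegrable
end

section
/- The area of the region {(x,y) : 0<x, 0<y, |x-y| < sqrt(1-x²-y²) < x+y} equals √3·π/18; consequently, if (u,v) is uniform on the simplex {u,v>0, u+v<1} and a=√u, b=√v, c=√(1-u-v), the probability that a,b,c satisfy the triangle inequalities is √3·π/9. -/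
open MeasureTheory Real

section SqrtStickAux
open Set intervalIntegral

lemma aux_hasDerivAt {t : ℝ} (h1 : -1 < t) (h2 : t < 1) :
    HasDerivAt (fun t : ℝ => (Real.arcsin t + t * Real.sqrt (1 - t ^ 2)) / 2)
      (Real.sqrt (1 - t ^ 2)) t := by
  have hs : 0 < 1 - t ^ 2 := by nlinarith
  have hsq : 0 < Real.sqrt (1 - t ^ 2) := Real.sqrt_pos.mpr hs
  have hsq2 : Real.sqrt (1 - t ^ 2) ^ 2 = 1 - t ^ 2 := Real.sq_sqrt hs.le
  have hA : HasDerivAt Real.arcsin (1 / Real.sqrt (1 - t ^ 2)) t :=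
    Real.hasDerivAt_arcsin (by linarith) (by linarith)
  have hQ : HasDerivAt (fun t : ℝ => 1 - t ^ 2) (-(2 * t)) t := by
    simpa using ((hasDerivAt_pow 2 t).const_sub 1)
  have hS : HasDerivAt (fun t : ℝ => Real.sqrt (1 - t ^ 2))
      (1 / (2 * Real.sqrt (1 - t ^ 2)) * (-(2 * t))) t :=
    (Real.hasDerivAt_sqrt hs.ne').comp t hQ
  have hP : HasDerivAt (fun t : ℝ => t * Real.sqrt (1 - t ^ 2))
      (1 * Real.sqrt (1 - t ^ 2) + t * (1 / (2 * Real.sqrt (1 - t ^ 2)) * (-(2 * t)))) t :=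
    (hasDerivAt_id t).mul hS
  have := (hA.add hP).div_const 2
  refine HasDerivAt.congr_deriv this ?_
  field_simp
  nlinarith [hsq2]

lemma aux_integral_sqrt (a b : ℝ) (ha : -1 ≤ a) (hb : b ≤ 1) (hab : a ≤ b) :
    ∫ t in a..b, Real.sqrt (1 - t ^ 2)
      = (Real.arcsin b + b * Real.sqrt (1 - b ^ 2)) / 2
        - (Real.arcsin a + a * Real.sqrt (1 - a ^ 2)) / 2 := by
  refine intervalIntegral.integral_eq_sub_of_hasDeriv_right_of_le
      (f := fun t : ℝ => (Real.arcsin t + t * Real.sqrt (1 - t ^ 2)) / 2) hab ?_ ?_ ?_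
  · apply Continuous.continuousOn
    exact ((Real.continuous_arcsin.add (continuous_id.mul
      ((continuous_const.sub (continuous_pow 2)).sqrt))).div_const 2)
  · intro x hx
    exact (aux_hasDerivAt (by linarith [hx.1]) (by linarith [hx.2])).hasDerivWithinAt
  · exact (Continuous.intervalIntegrable (by fun_prop) _ _)


noncomputable def w1 (x : ℝ) : ℝ := Real.sqrt (2 - 3 * x ^ 2)
noncomputable def f1 (x : ℝ) : ℝ := |x - w1 x| / 2
noncomputable def g1 (x : ℝ) : ℝ := (x + w1 x) / 2

lemma w1_cont : Continuous w1 := by unfold w1; fun_prop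

lemma sqrt_facts : Real.sqrt 2 * Real.sqrt 2 = 2 ∧ Real.sqrt 3 * Real.sqrt 3 = 3 := by
  exact ⟨Real.mul_self_sqrt (by norm_num), Real.mul_self_sqrt (by norm_num)⟩

lemma region1_integral :
    ∫ x in (0:ℝ)..(Real.sqrt (2/3)), (g1 x - f1 x) = Real.sqrt 3 * π / 18 := by
  have ha0 : (0:ℝ) ≤ Real.sqrt (1/2) := Real.sqrt_nonneg _
  have ha0c : Real.sqrt (1/2) ≤ Real.sqrt (2/3) := Real.sqrt_le_sqrt (by norm_num)
  have hcont : Continuous (fun x => g1 x - f1 x) := by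
    apply Continuous.sub
    · exact (continuous_id.add w1_cont).div_const 2
    · exact ((continuous_id.sub w1_cont).abs).div_const 2
  have hsplit := intervalIntegral.integral_add_adjacent_intervals
    (μ := volume) (a := (0:ℝ)) (b := Real.sqrt (1/2)) (c := Real.sqrt (2/3))
    (f := fun x => g1 x - f1 x)
    (hcont.intervalIntegrable _ _) (hcont.intervalIntegrable _ _)
  rw [← hsplit]
  -- first piece
  have hp1 : ∫ x in (0:ℝ)..(Real.sqrt (1/2)), (g1 x - f1 x) = 1/4 := by
    rw [intervalIntegral.integral_congr (g := fun x => x) ?_]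
    · rw [integral_id, Real.sq_sqrt (by norm_num : (0:ℝ) ≤ 1/2)]
      norm_num
    · intro x hx
      rw [Set.uIcc_of_le ha0, Set.mem_Icc] at hx
      have hx2 : x ^ 2 ≤ 1/2 := by
        have := pow_le_pow_left₀ hx.1 hx.2 2
        rwa [Real.sq_sqrt (by norm_num : (0:ℝ) ≤ 1/2)] at this
      have hxw : x ≤ w1 x := by
        rw [w1]
        exact (Real.le_sqrt hx.1 (by linarith)).mpr (by linarith)
      simp only [g1, f1, abs_of_nonpos (by linarith : x - w1 x ≤ 0)]
      ring
  -- second piece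
  have hp2 : ∫ x in (Real.sqrt (1/2))..(Real.sqrt (2/3)), (g1 x - f1 x)
      = Real.sqrt 3 * π / 18 - 1/4 := by
    rw [intervalIntegral.integral_congr (g := fun x => w1 x) ?_]
    · -- ∫ w1 over [√(1/2), √(2/3)]
      have hk : ∀ x : ℝ, w1 x = Real.sqrt 2 * Real.sqrt (1 - (Real.sqrt (3/2) * x) ^ 2) := by
        intro x
        rw [w1, show 2 - 3 * x ^ 2 = 2 * (1 - (Real.sqrt (3/2) * x) ^ 2) by
          rw [mul_pow, Real.sq_sqrt (by norm_num : (0:ℝ) ≤ 3/2)]; ring,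
          Real.sqrt_mul (by norm_num)]
      simp only [hk]
      rw [intervalIntegral.integral_const_mul,
        intervalIntegral.integral_comp_mul_left (fun t => Real.sqrt (1 - t ^ 2))
          (by positivity : Real.sqrt (3/2) ≠ 0)]
      have hb1 : Real.sqrt (3/2) * Real.sqrt (1/2) = Real.sqrt 3 / 2 := by
        have h34 : ((Real.sqrt 3) / 2) ^ 2 = 3/4 := by
          rw [div_pow, Real.sq_sqrt (by norm_num : (0:ℝ) ≤ 3)]; norm_num
        rw [← Real.sqrt_mul (by norm_num), show (3:ℝ)/2 * (1/2) = 3/4 by norm_num,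
          ← h34, Real.sqrt_sq (by positivity)]
      have hb2 : Real.sqrt (3/2) * Real.sqrt (2/3) = 1 := by
        rw [← Real.sqrt_mul (by norm_num), show (3:ℝ)/2 * (2/3) = 1 by norm_num, Real.sqrt_one]
      rw [hb1, hb2]
      have h31 : Real.sqrt 3 / 2 ≤ 1 := by
        rw [div_le_one (by norm_num)]
        rw [show (2:ℝ) = Real.sqrt 4 by
          rw [show (4:ℝ) = 2^2 by norm_num, Real.sqrt_sq (by norm_num)]]
        exact Real.sqrt_le_sqrt (by norm_num)
      have harc : Real.arcsin (Real.sqrt 3 / 2) = π / 3 := by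
        rw [← Real.sin_pi_div_three, Real.arcsin_sin (by linarith [Real.pi_pos])
          (by linarith [Real.pi_pos])]
      have h34 : ((Real.sqrt 3) / 2) ^ 2 = 3/4 := by
        rw [div_pow, Real.sq_sqrt (by norm_num : (0:ℝ) ≤ 3)]; norm_num
      have hq : Real.sqrt (1 - (Real.sqrt 3 / 2) ^ 2) = 1/2 := by
        rw [h34, show (1:ℝ) - 3/4 = (1/2)^2 by norm_num, Real.sqrt_sq (by norm_num)]
      rw [aux_integral_sqrt (Real.sqrt 3 / 2) 1
        (by linarith [Real.sqrt_nonneg 3] : (-1:ℝ) ≤ Real.sqrt 3 / 2) le_rfl h31,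
        harc, hq, Real.arcsin_one]
      have e0 : Real.sqrt 2 * Real.sqrt (3/2) = Real.sqrt 3 := by
        rw [← Real.sqrt_mul (by norm_num)]; norm_num
      have h32 : (0:ℝ) < Real.sqrt (3/2) := Real.sqrt_pos.mpr (by norm_num)
      have h3 : Real.sqrt 3 * Real.sqrt 3 = 3 := Real.mul_self_sqrt (by norm_num)
      have h2 : Real.sqrt 2 * Real.sqrt 2 = 2 := Real.mul_self_sqrt (by norm_num)
      rw [smul_eq_mul]
      norm_num [Real.sqrt_zero]
      field_simp
      nlinarith [Real.pi_pos, Real.sqrt_nonneg 2, Real.sqrt_nonneg 3]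
    · intro x hx
      rw [Set.uIcc_of_le ha0c, Set.mem_Icc] at hx
      have hx2 : 1/2 ≤ x ^ 2 := by
        have := pow_le_pow_left₀ ha0 hx.1 2
        rwa [Real.sq_sqrt (by norm_num : (0:ℝ) ≤ 1/2)] at this
      have hx0 : 0 ≤ x := ha0.trans hx.1
      have hxw : w1 x ≤ x := by
        have h := Real.sqrt_le_sqrt (by linarith : 2 - 3 * x ^ 2 ≤ x ^ 2)
        rwa [Real.sqrt_sq hx0, ← w1] at h
      simp only [g1, f1, abs_of_nonneg (by linarith : 0 ≤ x - w1 x)]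
      ring
  rw [hp1, hp2]
  ring


noncomputable def w2 (u : ℝ) : ℝ := Real.sqrt (2 * u - 3 * u ^ 2)
noncomputable def f2 (u : ℝ) : ℝ := ((1 - u) - w2 u) / 2
noncomputable def g2 (u : ℝ) : ℝ := ((1 - u) + w2 u) / 2

lemma region2_eq :
    {q : ℝ × ℝ | (0 < q.1 ∧ 0 < q.2 ∧ q.1 + q.2 < 1) ∧
        |Real.sqrt q.1 - Real.sqrt q.2| < Real.sqrt (1 - q.1 - q.2) ∧
        Real.sqrt (1 - q.1 - q.2) < Real.sqrt q.1 + Real.sqrt q.2}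
      = regionBetween f2 g2 (Set.Ioo 0 (2/3)) := by
  ext ⟨u, v⟩
  simp only [regionBetween, Set.mem_setOf_eq, Set.mem_Ioo, f2, g2, w2]
  constructor
  · rintro ⟨⟨hu, hv, huv⟩, h1, h2⟩
    set a := Real.sqrt u with ha
    set b := Real.sqrt v with hb
    set c := Real.sqrt (1 - u - v) with hc
    have ha2 : a ^ 2 = u := Real.sq_sqrt hu.le
    have hb2 : b ^ 2 = v := Real.sq_sqrt hv.le
    have hc2 : c ^ 2 = 1 - u - v := Real.sq_sqrt (by linarith)
    have hab : 0 < a * b := mul_pos (Real.sqrt_pos.mpr hu) (Real.sqrt_pos.mpr hv)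
    have k1 : (a - b) ^ 2 < c ^ 2 := by
      simpa [sq_abs] using pow_lt_pow_left₀ h1 (abs_nonneg _) two_ne_zero
    have k2 : c ^ 2 < (a + b) ^ 2 :=
      pow_lt_pow_left₀ h2 (Real.sqrt_nonneg _) two_ne_zero
    have key : (2 * v - (1 - u)) ^ 2 < 2 * u - 3 * u ^ 2 := by
      nlinarith [sq_nonneg (a * b), sq_nonneg (a - b), sq_nonneg (a + b)]
    have hpos : 0 < 2 * u - 3 * u ^ 2 := lt_of_le_of_lt (sq_nonneg _) key
    have hu23 : u < 2 / 3 := by nlinarith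
    have habs : |2 * v - (1 - u)| < Real.sqrt (2 * u - 3 * u ^ 2) :=
      (Real.lt_sqrt (abs_nonneg _)).mpr (by rwa [sq_abs])
    rw [abs_lt] at habs
    exact ⟨⟨hu, hu23⟩, by linarith [habs.1], by linarith [habs.2]⟩
  · rintro ⟨⟨hu0, hu23⟩, hvl, hvu⟩
    have hpos : 0 < 2 * u - 3 * u ^ 2 := by nlinarith
    set s := Real.sqrt (2 * u - 3 * u ^ 2) with hs
    have hs2 : s ^ 2 = 2 * u - 3 * u ^ 2 := Real.sq_sqrt hpos.le
    have hs0 : 0 < s := Real.sqrt_pos.mpr hpos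
    have hsle : s ≤ 1 - u := by
      rw [hs, show (1:ℝ) - u = Real.sqrt ((1 - u) ^ 2) by
        rw [Real.sqrt_sq (by linarith)]]
      exact Real.sqrt_le_sqrt (by nlinarith [sq_nonneg (2 * u - 1)])
    have hv : 0 < v := by linarith
    have huv : u + v < 1 := by linarith
    have key : (2 * v - (1 - u)) ^ 2 < 2 * u - 3 * u ^ 2 := by
      rw [← hs2]
      exact sq_lt_sq' (by linarith) (by linarith)
    -- now translate back to the sqrt inequalities
    have hD : 0 < 1 - u - v := by linarith
    have huvkey : (2 * (u + v) - 1) ^ 2 < 4 * (u * v) := by nlinarith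
    have hsab : Real.sqrt u * Real.sqrt v = Real.sqrt (u * v) :=
      (Real.sqrt_mul hu0.le v).symm
    have huv0 : (0:ℝ) < u * v := mul_pos hu0 hv
    have hsuv : Real.sqrt (u * v) ^ 2 = u * v := Real.sq_sqrt huv0.le
    have hsuv0 : 0 < Real.sqrt (u * v) := Real.sqrt_pos.mpr huv0
    have hlt1 : 2 * (u + v) - 1 < 2 * Real.sqrt (u * v) := by
      rcases le_or_gt (2 * (u + v) - 1) 0 with h | h
      · linarith
      · have : (2 * (u + v) - 1) ^ 2 < (2 * Real.sqrt (u * v)) ^ 2 := by nlinarith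
        exact lt_of_pow_lt_pow_left₀ 2 (by positivity) this
    have hlt2 : 1 - 2 * (u + v) < 2 * Real.sqrt (u * v) := by
      rcases le_or_gt (1 - 2 * (u + v)) 0 with h | h
      · linarith
      · have : (1 - 2 * (u + v)) ^ 2 < (2 * Real.sqrt (u * v)) ^ 2 := by nlinarith
        exact lt_of_pow_lt_pow_left₀ 2 (by positivity) this
    have ha2 : Real.sqrt u ^ 2 = u := Real.sq_sqrt hu0.le
    have hb2 : Real.sqrt v ^ 2 = v := Real.sq_sqrt hv.le
    refine ⟨⟨hu0, hv, huv⟩, ?_, ?_⟩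
    · rw [show |Real.sqrt u - Real.sqrt v| = Real.sqrt ((Real.sqrt u - Real.sqrt v) ^ 2) from
        (Real.sqrt_sq_eq_abs _).symm]
      apply Real.sqrt_lt_sqrt (sq_nonneg _)
      have e1 : (Real.sqrt u - Real.sqrt v) ^ 2 = u + v - 2 * Real.sqrt (u * v) := by
        rw [sub_sq, ha2, hb2, mul_assoc, hsab]; ring
      linarith [hlt1]
    · rw [show Real.sqrt u + Real.sqrt v = Real.sqrt ((Real.sqrt u + Real.sqrt v) ^ 2) from
        (Real.sqrt_sq (by positivity)).symm]
      apply Real.sqrt_lt_sqrt hD.le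
      have e2 : (Real.sqrt u + Real.sqrt v) ^ 2 = u + v + 2 * Real.sqrt (u * v) := by
        rw [add_sq, ha2, hb2, mul_assoc, hsab]; ring
      linarith [hlt2]

lemma w2_cont : Continuous w2 := by
  unfold w2; fun_prop

lemma region2_vol :
    volume {q : ℝ × ℝ | (0 < q.1 ∧ 0 < q.2 ∧ q.1 + q.2 < 1) ∧
        |Real.sqrt q.1 - Real.sqrt q.2| < Real.sqrt (1 - q.1 - q.2) ∧
        Real.sqrt (1 - q.1 - q.2) < Real.sqrt q.1 + Real.sqrt q.2}
      = ENNReal.ofReal (Real.sqrt 3 * π / 18) := by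
  have hf : Continuous f2 := ((continuous_const.sub continuous_id).sub w2_cont).div_const 2
  have hg : Continuous g2 := ((continuous_const.sub continuous_id).add w2_cont).div_const 2
  rw [region2_eq, Measure.volume_eq_prod,
    volume_regionBetween_eq_integral
      ((hf.integrableOn_Icc (a := 0) (b := 2/3)).mono_set Set.Ioo_subset_Icc_self)
      ((hg.integrableOn_Icc (a := 0) (b := 2/3)).mono_set Set.Ioo_subset_Icc_self)
      measurableSet_Ioo
      (fun u _ => by
        simp only [f2, g2]
        have := Real.sqrt_nonneg (2 * u - 3 * u ^ 2)
        unfold w2; linarith)]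
  congr 1
  have hfg : (g2 - f2) = w2 := by funext u; simp [f2, g2]; ring
  rw [hfg, ← MeasureTheory.integral_Ioc_eq_integral_Ioo,
    ← intervalIntegral.integral_of_le (by norm_num : (0:ℝ) ≤ 2/3)]
  have hw : ∀ u : ℝ, w2 u = (Real.sqrt 3)⁻¹ * Real.sqrt (1 - (3 * u + (-1)) ^ 2) := by
    intro u
    rw [w2, show 2 * u - 3 * u ^ 2 = 3⁻¹ * (1 - (3 * u + (-1)) ^ 2) by ring,
      Real.sqrt_mul (by norm_num), Real.sqrt_inv]
  simp only [hw]
  rw [intervalIntegral.integral_const_mul,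
    intervalIntegral.integral_comp_mul_add (fun t => Real.sqrt (1 - t ^ 2))
      (by norm_num : (3:ℝ) ≠ 0) (-1)]
  norm_num [integral_sqrt_one_sub_sq]
  have h3 : Real.sqrt 3 * Real.sqrt 3 = 3 := Real.mul_self_sqrt (by norm_num)
  have h3p : (0:ℝ) < Real.sqrt 3 := Real.sqrt_pos.mpr (by norm_num)
  field_simp
  nlinarith [Real.pi_pos]


lemma region1_eq :
    {p : ℝ × ℝ | 0 < p.1 ∧ 0 < p.2 ∧
        |p.1 - p.2| < Real.sqrt (1 - p.1 ^ 2 - p.2 ^ 2) ∧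
        Real.sqrt (1 - p.1 ^ 2 - p.2 ^ 2) < p.1 + p.2}
      = regionBetween f1 g1 (Set.Ioo 0 (Real.sqrt (2/3))) := by
  ext ⟨x, y⟩
  simp only [regionBetween, Set.mem_setOf_eq, Set.mem_Ioo, f1, g1, w1]
  constructor
  · rintro ⟨hx, hy, h1, h2⟩
    have hD : 0 < 1 - x ^ 2 - y ^ 2 := by
      by_contra h
      push_neg at h
      rw [Real.sqrt_eq_zero'.mpr h] at h1
      exact absurd h1 (not_lt.mpr (abs_nonneg _))
    have k1 : (x - y) ^ 2 < 1 - x ^ 2 - y ^ 2 := by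
      have := (Real.lt_sqrt (abs_nonneg (x - y))).mp h1
      rwa [sq_abs] at this
    have k2 : 1 - x ^ 2 - y ^ 2 < (x + y) ^ 2 := (Real.sqrt_lt' (by linarith)).mp h2
    have key1 : (2 * y - x) ^ 2 < 2 - 3 * x ^ 2 := by nlinarith
    have hpos : 0 < 2 - 3 * x ^ 2 := lt_of_le_of_lt (sq_nonneg _) key1
    have hx23 : x < Real.sqrt (2/3) := (Real.lt_sqrt hx.le).mpr (by nlinarith)
    set s := Real.sqrt (2 - 3 * x ^ 2) with hs
    have hs2 : s ^ 2 = 2 - 3 * x ^ 2 := Real.sq_sqrt hpos.le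
    have hs0 : 0 < s := Real.sqrt_pos.mpr hpos
    have habs : |2 * y - x| < s := (Real.lt_sqrt (abs_nonneg _)).mpr (by rwa [sq_abs])
    rw [abs_lt] at habs
    have key2 : s ^ 2 < (2 * y + x) ^ 2 := by nlinarith
    have h2yx : s < 2 * y + x := lt_of_pow_lt_pow_left₀ 2 (by positivity) key2
    refine ⟨⟨hx, hx23⟩, ?_, by linarith [habs.2]⟩
    rw [div_lt_iff₀ (by norm_num : (0:ℝ) < 2), abs_lt]
    constructor <;> linarith [habs.1]
  · rintro ⟨⟨hx, hx23⟩, hyl, hyu⟩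
    have hpos : 0 < 2 - 3 * x ^ 2 := by
      have := (Real.lt_sqrt hx.le).mp hx23
      linarith
    set s := Real.sqrt (2 - 3 * x ^ 2) with hs
    have hs2 : s ^ 2 = 2 - 3 * x ^ 2 := Real.sq_sqrt hpos.le
    have hs0 : 0 < s := Real.sqrt_pos.mpr hpos
    rw [div_lt_iff₀ (by norm_num : (0:ℝ) < 2), abs_lt] at hyl
    have hy : 0 < y := by
      rcases le_or_gt x s with h | h
      · linarith [hyl.1]
      · linarith [hyl.2]
    have habs : |2 * y - x| < s := by
      rw [abs_lt]; constructor <;> [linarith [hyl.2]; linarith]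
    have key1 : (2 * y - x) ^ 2 < s ^ 2 := by
      rw [abs_lt] at habs
      exact sq_lt_sq' (by linarith [habs.1]) habs.2
    have h2yx : s < 2 * y + x := by linarith [hyl.2]
    have key2 : s ^ 2 < (2 * y + x) ^ 2 := by nlinarith
    have hD : (x - y) ^ 2 < 1 - x ^ 2 - y ^ 2 := by nlinarith
    have hD2 : 1 - x ^ 2 - y ^ 2 < (x + y) ^ 2 := by nlinarith
    refine ⟨hx, hy, ?_, ?_⟩
    · exact (Real.lt_sqrt (abs_nonneg _)).mpr (by rwa [sq_abs])
    · exact (Real.sqrt_lt' (by linarith)).mpr hD2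

lemma region1_vol :
    volume {p : ℝ × ℝ | 0 < p.1 ∧ 0 < p.2 ∧
        |p.1 - p.2| < Real.sqrt (1 - p.1 ^ 2 - p.2 ^ 2) ∧
        Real.sqrt (1 - p.1 ^ 2 - p.2 ^ 2) < p.1 + p.2}
      = ENNReal.ofReal (Real.sqrt 3 * π / 18) := by
  have hf : Continuous f1 := ((continuous_id.sub w1_cont).abs).div_const 2
  have hg : Continuous g1 := (continuous_id.add w1_cont).div_const 2
  rw [region1_eq, Measure.volume_eq_prod,
    volume_regionBetween_eq_integral
      ((hf.integrableOn_Icc (a := 0) (b := Real.sqrt (2/3))).mono_set Set.Ioo_subset_Icc_self)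
      ((hg.integrableOn_Icc (a := 0) (b := Real.sqrt (2/3))).mono_set Set.Ioo_subset_Icc_self)
      measurableSet_Ioo
      (fun x hx => by
        simp only [f1, g1]
        have hw := Real.sqrt_nonneg (2 - 3 * x ^ 2)
        have hx0 : 0 < x := hx.1
        rw [div_le_div_iff_of_pos_right (by norm_num : (0:ℝ) < 2), abs_le]
        unfold w1
        constructor <;> linarith)]
  congr 1
  rw [show ((g1 - f1) : ℝ → ℝ) = fun x => g1 x - f1 x from rfl,
    ← MeasureTheory.integral_Ioc_eq_integral_Ioo,
    ← intervalIntegral.integral_of_le (Real.sqrt_nonneg _)]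
  exact region1_integral

lemma simplex_vol :
    volume {q : ℝ × ℝ | 0 < q.1 ∧ 0 < q.2 ∧ q.1 + q.2 < 1}
      = ENNReal.ofReal (1/2) := by
  have heq : {q : ℝ × ℝ | 0 < q.1 ∧ 0 < q.2 ∧ q.1 + q.2 < 1}
      = regionBetween (fun _ => (0:ℝ)) (fun u => 1 - u) (Set.Ioo 0 1) := by
    ext ⟨u, v⟩
    simp only [regionBetween, Set.mem_setOf_eq, Set.mem_Ioo]
    constructor
    · rintro ⟨hu, hv, huv⟩
      exact ⟨⟨hu, by linarith⟩, hv, by linarith⟩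
    · rintro ⟨⟨hu, hu1⟩, hv, huv⟩
      exact ⟨hu, hv, by linarith⟩
  rw [heq, Measure.volume_eq_prod,
    volume_regionBetween_eq_integral
      ((continuous_const.integrableOn_Icc (a := (0:ℝ)) (b := 1)).mono_set Set.Ioo_subset_Icc_self)
      ((((by fun_prop : Continuous (fun u : ℝ => 1 - u))).integrableOn_Icc (a := (0:ℝ)) (b := 1)).mono_set
        Set.Ioo_subset_Icc_self)
      measurableSet_Ioo
      (fun u hu => by show (0:ℝ) ≤ 1 - u; linarith [hu.2])]
  congr 1
  rw [show ((fun u : ℝ => 1 - u) - (fun _ : ℝ => (0:ℝ)) : ℝ → ℝ) = fun u => 1 - u from by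
      funext u; simp [Pi.sub_apply],
    ← MeasureTheory.integral_Ioc_eq_integral_Ioo,
    ← intervalIntegral.integral_of_le (by norm_num : (0:ℝ) ≤ 1)]
  simp [intervalIntegral.integral_sub (intervalIntegrable_const) intervalIntegral.intervalIntegrable_id]
  norm_num


end SqrtStickAux

/-- The region `{|x-y| < √(1-x²-y²) < x+y}` has area `√3·π/18`; consequently, for
`(u,v)` uniform on the simplex, the pieces `√u, √v, √(1-u-v)` satisfy the triangle
inequalities with probability `√3·π/9`. -/
theorem sqrt_stick_breaking_triangle_prob :
    volume {p : ℝ × ℝ | 0 < p.1 ∧ 0 < p.2 ∧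
        |p.1 - p.2| < Real.sqrt (1 - p.1 ^ 2 - p.2 ^ 2) ∧
        Real.sqrt (1 - p.1 ^ 2 - p.2 ^ 2) < p.1 + p.2}
      = ENNReal.ofReal (Real.sqrt 3 * π / 18) ∧
    volume {q : ℝ × ℝ | (0 < q.1 ∧ 0 < q.2 ∧ q.1 + q.2 < 1) ∧
        |Real.sqrt q.1 - Real.sqrt q.2| < Real.sqrt (1 - q.1 - q.2) ∧
        Real.sqrt (1 - q.1 - q.2) < Real.sqrt q.1 + Real.sqrt q.2} /
      volume {q : ℝ × ℝ | 0 < q.1 ∧ 0 < q.2 ∧ q.1 + q.2 < 1}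
      = ENNReal.ofReal (Real.sqrt 3 * π / 9) := by
  refine ⟨region1_vol, ?_⟩
  rw [region2_vol, simplex_vol, ← ENNReal.ofReal_div_of_pos (by norm_num)]
  norm_num
  ring_nf
end

section
/- The integral over the triangle {(x,y) : 0<x<π, 0<y<π, x+y<π} of (24√3/π)·sin(x)²·sin(y)²·sin(x+y)²/(sin(x)²+sin(y)²+sin(x+y)²)^3 equals 1. -/
open MeasureTheory Real

noncomputable section AngleDensityAux

/-- unnormalized density -/
private def f0 (x y : ℝ) : ℝ :=
  sin x ^ 2 * sin y ^ 2 * sin (x + y) ^ 2 /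
    (sin x ^ 2 + sin y ^ 2 + sin (x + y) ^ 2) ^ 3

private def rr (x : ℝ) : ℝ := Real.sqrt (3 + sin x ^ 2)

/-- value of the inner integral -/
private def Inn (x : ℝ) : ℝ :=
  sin x * (3 - sin x ^ 2) * (π - x - 2 * arctan (cos x / (2 * sin x + rr x)))
      / (4 * (3 + sin x ^ 2) ^ 2 * rr x)
    + 3 * sin x * cos x / (8 * (3 + sin x ^ 2) ^ 2)

/-- antiderivative of `Inn` -/
private def HH (x : ℝ) : ℝ :=
  -((π - x - 2 * arctan (cos x / (2 * sin x + rr x))) * cos x / (8 * (3 + sin x ^ 2) * rr x))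
    - 1 / (8 * (3 + sin x ^ 2))

/-- inner antiderivative (in `u = x + 2y`), with `s = sin x`, `c = cos x`, `r = √(3+s²)` -/
private def Phi (s c r u : ℝ) : ℝ :=
  s * (3 - s ^ 2) / (8 * (3 + s ^ 2) ^ 2 * r) *
      (u + 2 * arctan (c * Real.sin u / ((1 + s ^ 2 - c * Real.cos u) + s * r)))
    - s ^ 2 / (8 * (3 + s ^ 2) ^ 2) *
      (Real.sin u * (2 * c * (3 + 2 * s ^ 2) + (2 * s ^ 2 - 6) * Real.cos u)) /
        (1 + s ^ 2 - c * Real.cos u) ^ 2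

private lemma Dpos {s c : ℝ} (hs : 0 < s) (hsc : s ^ 2 + c ^ 2 = 1) (u : ℝ) :
    0 < 1 + s ^ 2 - c * Real.cos u := by
  have h1 := Real.sin_sq_add_cos_sq u
  nlinarith [sq_nonneg (c - Real.cos u), sq_nonneg (Real.sin u)]

set_option maxRecDepth 10000 in
private lemma Phi_deriv {s c r : ℝ} (hs : 0 < s) (hsc : s ^ 2 + c ^ 2 = 1)
    (hr2 : r ^ 2 = 3 + s ^ 2) (hr : 0 < r) (u : ℝ) :
    HasDerivAt (Phi s c r)
      (s ^ 2 * (c - Real.cos u) ^ 2 / (8 * (1 + s ^ 2 - c * Real.cos u) ^ 3)) u := by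
  have hD : 0 < 1 + s ^ 2 - c * Real.cos u := Dpos hs hsc u
  have hDr : 0 < (1 + s ^ 2 - c * Real.cos u) + s * r := by positivity
  have hsu := Real.sin_sq_add_cos_sq u
  have hDdu : HasDerivAt (fun u => 1 + s ^ 2 - c * Real.cos u) (c * Real.sin u) u := by
    simpa using ((Real.hasDerivAt_cos u).const_mul c).const_sub (1 + s ^ 2)
  have hden : HasDerivAt (fun u => (1 + s ^ 2 - c * Real.cos u) + s * r) (c * Real.sin u) u :=
    hDdu.add_const _
  have hnum : HasDerivAt (fun u => c * Real.sin u) (c * Real.cos u) u :=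
    (Real.hasDerivAt_sin u).const_mul c
  have hw : HasDerivAt
      (fun u => c * Real.sin u / ((1 + s ^ 2 - c * Real.cos u) + s * r))
      ((c * Real.cos u * ((1 + s ^ 2 - c * Real.cos u) + s * r)
        - c * Real.sin u * (c * Real.sin u)) /
        ((1 + s ^ 2 - c * Real.cos u) + s * r) ^ 2) u :=
    hnum.div hden hDr.ne'
  have h1 : HasDerivAt
      (fun u => u + 2 * arctan (c * Real.sin u / ((1 + s ^ 2 - c * Real.cos u) + s * r)))
      (s * r / (1 + s ^ 2 - c * Real.cos u)) u := by
    have h := (hasDerivAt_id u).add ((hw.arctan).const_mul 2)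
    refine h.congr_deriv ?_
    have h3' : (1 : ℝ) + (c * Real.sin u / ((1 + s ^ 2 - c * Real.cos u) + s * r)) ^ 2 ≠ 0 := by
      positivity
    field_simp
    grind
    
  have hN : HasDerivAt
      (fun u => Real.sin u * (2 * c * (3 + 2 * s ^ 2) + (2 * s ^ 2 - 6) * Real.cos u))
      (Real.cos u * (2 * c * (3 + 2 * s ^ 2) + (2 * s ^ 2 - 6) * Real.cos u)
        + Real.sin u * ((2 * s ^ 2 - 6) * -Real.sin u)) u :=
    (Real.hasDerivAt_sin u).mul
      (((Real.hasDerivAt_cos u).const_mul (2 * s ^ 2 - 6)).const_add (2 * c * (3 + 2 * s ^ 2)))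
  have hD2 : HasDerivAt (fun u => (1 + s ^ 2 - c * Real.cos u) ^ 2)
      (2 * (1 + s ^ 2 - c * Real.cos u) ^ 1 * (c * Real.sin u)) u := hDdu.pow 2
  have h2 : HasDerivAt
      (fun u => Real.sin u * (2 * c * (3 + 2 * s ^ 2) + (2 * s ^ 2 - 6) * Real.cos u) /
        (1 + s ^ 2 - c * Real.cos u) ^ 2)
      (((Real.cos u * (2 * c * (3 + 2 * s ^ 2) + (2 * s ^ 2 - 6) * Real.cos u)
        + Real.sin u * ((2 * s ^ 2 - 6) * -Real.sin u)) * (1 + s ^ 2 - c * Real.cos u) ^ 2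
        - Real.sin u * (2 * c * (3 + 2 * s ^ 2) + (2 * s ^ 2 - 6) * Real.cos u) *
          (2 * (1 + s ^ 2 - c * Real.cos u) ^ 1 * (c * Real.sin u))) /
        ((1 + s ^ 2 - c * Real.cos u) ^ 2) ^ 2) u :=
    hN.div hD2 (by positivity)
  have h2' : HasDerivAt
      (fun u => Real.sin u * (2 * c * (3 + 2 * s ^ 2) + (2 * s ^ 2 - 6) * Real.cos u) /
        (1 + s ^ 2 - c * Real.cos u) ^ 2)
      (((Real.cos u * (2 * c * (3 + 2 * s ^ 2) + (2 * s ^ 2 - 6) * Real.cos u)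
        - (2 * s ^ 2 - 6) * Real.sin u ^ 2) * (1 + s ^ 2 - c * Real.cos u)
        - Real.sin u * (2 * c * (3 + 2 * s ^ 2) + (2 * s ^ 2 - 6) * Real.cos u) *
          (2 * (c * Real.sin u))) /
        (1 + s ^ 2 - c * Real.cos u) ^ 3) u := by
    convert h2 using 1
    field_simp
    ring
  have hP1 : HasDerivAt
      (fun u => s * (3 - s ^ 2) / (8 * (3 + s ^ 2) ^ 2 * r) *
        (u + 2 * arctan (c * Real.sin u / ((1 + s ^ 2 - c * Real.cos u) + s * r))))
      (s ^ 2 * (3 - s ^ 2) / (8 * (3 + s ^ 2) ^ 2 * (1 + s ^ 2 - c * Real.cos u))) u := by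
    have h := h1.const_mul (s * (3 - s ^ 2) / (8 * (3 + s ^ 2) ^ 2 * r))
    refine h.congr_deriv ?_
    have h3s : (0:ℝ) < 3 + s ^ 2 := by positivity
    field_simp
  have hcomb := hP1.sub (h2'.const_mul (s ^ 2 / (8 * (3 + s ^ 2) ^ 2)))
  have heq : Phi s c r = fun u =>
      s * (3 - s ^ 2) / (8 * (3 + s ^ 2) ^ 2 * r) *
        (u + 2 * arctan (c * Real.sin u / ((1 + s ^ 2 - c * Real.cos u) + s * r)))
      - s ^ 2 / (8 * (3 + s ^ 2) ^ 2) *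
        (Real.sin u * (2 * c * (3 + 2 * s ^ 2) + (2 * s ^ 2 - 6) * Real.cos u) /
          (1 + s ^ 2 - c * Real.cos u) ^ 2) := by
    funext v; unfold Phi; ring
  rw [heq]
  refine hcomb.congr_deriv ?_
  have h3s : (0:ℝ) < 3 + s ^ 2 := by positivity
  field_simp
  grind
  

private lemma inner_val {x : ℝ} (hx0 : 0 < x) (hxpi : x < π) :
    ∫ y in (0:ℝ)..(π - x), f0 x y = Inn x := by
  have hs : 0 < sin x := sin_pos_of_pos_of_lt_pi hx0 hxpi
  have hsc : sin x ^ 2 + cos x ^ 2 = 1 := sin_sq_add_cos_sq x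
  have h3s : (0:ℝ) < 3 + sin x ^ 2 := by positivity
  have hr2 : rr x ^ 2 = 3 + sin x ^ 2 := Real.sq_sqrt h3s.le
  have hr : 0 < rr x := Real.sqrt_pos.mpr h3s
  have hderiv : ∀ y ∈ Set.uIcc (0:ℝ) (π - x),
      HasDerivAt (fun y => Phi (sin x) (cos x) (rr x) (x + 2 * y)) (f0 x y) y := by
    intro y _
    have harg : HasDerivAt (fun y : ℝ => x + 2 * y) 2 y := by
      simpa using ((hasDerivAt_id y).const_mul 2).const_add x
    have hcomp := (Phi_deriv hs hsc hr2 hr (x + 2 * y)).comp y harg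
    refine hcomp.congr_deriv ?_
    have hnum : sin y ^ 2 * sin (x + y) ^ 2 = (cos x - Real.cos (x + 2 * y)) ^ 2 / 4 := by
      have h := Real.cos_sub_cos x (x + 2 * y)
      rw [show (x + (x + 2 * y)) / 2 = x + y by ring, show (x - (x + 2 * y)) / 2 = -y by ring,
        Real.sin_neg] at h
      rw [h]; ring
    have hden : sin x ^ 2 + sin y ^ 2 + sin (x + y) ^ 2
        = 1 + sin x ^ 2 - cos x * Real.cos (x + 2 * y) := by
      have h := Real.cos_add_cos (2 * y) (2 * (x + y))
      rw [show (2 * y + 2 * (x + y)) / 2 = x + 2 * y by ring,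
        show (2 * y - 2 * (x + y)) / 2 = -x by ring, Real.cos_neg] at h
      rw [Real.sin_sq_eq_half_sub y, Real.sin_sq_eq_half_sub (x + y)]
      linear_combination (-1/2 : ℝ) * h
    have hD : 0 < 1 + sin x ^ 2 - cos x * Real.cos (x + 2 * y) := Dpos hs hsc (x + 2 * y)
    unfold f0
    rw [hden, mul_assoc, hnum]
    field_simp
    ring
  have hpos : ∀ y : ℝ, 0 < sin x ^ 2 + sin y ^ 2 + sin (x + y) ^ 2 := by
    intro y
    have h1 : 0 < sin x ^ 2 := pow_pos hs 2
    nlinarith [sq_nonneg (sin y), sq_nonneg (sin (x + y))]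
  have hcont : IntervalIntegrable (fun y => f0 x y) volume 0 (π - x) := by
    apply Continuous.intervalIntegrable
    unfold f0
    apply Continuous.div
    · fun_prop
    · fun_prop
    · intro y
      exact pow_ne_zero 3 (hpos y).ne'
  rw [intervalIntegral.integral_eq_sub_of_hasDerivAt hderiv hcont]
  rw [show x + 2 * (π - x) = 2 * π - x by ring, show x + 2 * (0:ℝ) = x by ring]
  have hs2 : Real.sin (2 * π - x) = -sin x := by
    simp [Real.sin_sub]
  have hc2 : Real.cos (2 * π - x) = cos x := by
    simp [Real.cos_sub]
  have hDD : 1 + sin x ^ 2 - cos x * cos x = 2 * sin x ^ 2 := by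
    linear_combination -hsc
  have h2sr : (0:ℝ) < 2 * sin x + rr x := by positivity
  have hfac : cos x * sin x / (2 * sin x ^ 2 + sin x * rr x) = cos x / (2 * sin x + rr x) := by
    rw [show 2 * sin x ^ 2 + sin x * rr x = sin x * (2 * sin x + rr x) by ring,
      show cos x * sin x = sin x * cos x by ring, mul_div_mul_left _ _ hs.ne']
  unfold Phi Inn
  rw [hs2, hc2, hDD]
  rw [show cos x * -sin x / (2 * sin x ^ 2 + sin x * rr x)
      = -(cos x * sin x / (2 * sin x ^ 2 + sin x * rr x)) by ring]
  rw [hfac, Real.arctan_neg]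
  field_simp
  ring

private lemma rr_pos (x : ℝ) : 0 < rr x := Real.sqrt_pos.mpr (by positivity)

private lemma rr_sq (x : ℝ) : rr x ^ 2 = 3 + sin x ^ 2 := Real.sq_sqrt (by positivity)

private lemma rr_hasDeriv (x : ℝ) : HasDerivAt rr (sin x * cos x / rr x) x := by
  have h3s : (0:ℝ) < 3 + sin x ^ 2 := by positivity
  have h1 : HasDerivAt (fun x => 3 + sin x ^ 2) (2 * sin x * cos x) x := by
    have := ((Real.hasDerivAt_sin x).pow 2).const_add 3
    simpa [mul_assoc] using this
  have h2 := (Real.hasDerivAt_sqrt h3s.ne').comp x h1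
  have hr : 0 < rr x := rr_pos x
  refine h2.congr_deriv ?_
  have : Real.sqrt (3 + sin x ^ 2) = rr x := rfl
  rw [this]
  field_simp

private lemma HH_deriv {x : ℝ} (hx0 : 0 ≤ x) (hxpi : x ≤ π) : HasDerivAt HH (Inn x) x := by
  have hsnn : 0 ≤ sin x := Real.sin_nonneg_of_nonneg_of_le_pi hx0 hxpi
  have hsc : sin x ^ 2 + cos x ^ 2 = 1 := sin_sq_add_cos_sq x
  have hr : 0 < rr x := rr_pos x
  have hr2 : rr x ^ 2 = 3 + sin x ^ 2 := rr_sq x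
  have h2sr : (0:ℝ) < 2 * sin x + rr x := by linarith
  have hrd := rr_hasDeriv x
  have hw : HasDerivAt (fun x => cos x / (2 * sin x + rr x))
      ((-sin x * (2 * sin x + rr x) - cos x * (2 * cos x + sin x * cos x / rr x)) /
        (2 * sin x + rr x) ^ 2) x :=
    (Real.hasDerivAt_cos x).div (((Real.hasDerivAt_sin x).const_mul 2).add hrd) h2sr.ne'
  have hA : HasDerivAt (fun x => π - x - 2 * arctan (cos x / (2 * sin x + rr x)))
      (-(sin x / rr x)) x := by
    have h := ((hasDerivAt_id x).const_sub π).sub ((hw.arctan).const_mul 2)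
    refine h.congr_deriv ?_
    have hw2 : (0:ℝ) < 1 + (cos x / (2 * sin x + rr x)) ^ 2 := by positivity
    field_simp
    grind
    
  have h3d : HasDerivAt (fun x => 3 + sin x ^ 2) (2 * sin x * cos x) x := by
    simpa [mul_assoc] using ((Real.hasDerivAt_sin x).pow 2).const_add 3
  have hg : HasDerivAt (fun x => 8 * (3 + sin x ^ 2) * rr x)
      (8 * (2 * sin x * cos x) * rr x + 8 * (3 + sin x ^ 2) * (sin x * cos x / rr x)) x := by
    have := (h3d.const_mul 8).mul hrd
    convert this using 1 <;> rfl
  have hnum := hA.mul (Real.hasDerivAt_cos x)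
  have hfrac := hnum.div hg (by positivity)
  have hk : HasDerivAt (fun x => 8 * (3 + sin x ^ 2)) (8 * (2 * sin x * cos x)) x :=
    h3d.const_mul 8
  have hinv := (hasDerivAt_const x (1:ℝ)).div hk (by positivity)
  have hfin := (hfrac.neg).sub hinv
  have hHH : HH = fun x =>
      -((π - x - 2 * arctan (cos x / (2 * sin x + rr x))) * cos x
          / (8 * (3 + sin x ^ 2) * rr x))
        - 1 / (8 * (3 + sin x ^ 2)) := rfl
  rw [hHH]
  refine hfin.congr_deriv ?_
  simp only [Pi.mul_apply]
  unfold Inn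
  generalize arctan (cos x / (2 * sin x + rr x)) = A
  have h3s : (0:ℝ) < 3 + sin x ^ 2 := by positivity
  field_simp
  grind
  

private lemma outer_val : ∫ x in (0:ℝ)..π, Inn x = π / (24 * Real.sqrt 3) := by
  have hInt : IntervalIntegrable Inn volume 0 π := by
    apply ContinuousOn.intervalIntegrable
    have hrrc : Continuous rr := Real.continuous_sqrt.comp (by fun_prop)
    have hden : ∀ x ∈ Set.uIcc (0:ℝ) π, 2 * sin x + rr x ≠ 0 := by
      intro x hx
      rw [Set.uIcc_of_le Real.pi_pos.le] at hx
      have h1 : 0 ≤ sin x := Real.sin_nonneg_of_nonneg_of_le_pi hx.1 hx.2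
      have h2 : 0 < rr x := rr_pos x
      positivity
    have harctan : ContinuousOn (fun x => arctan (cos x / (2 * sin x + rr x)))
        (Set.uIcc (0:ℝ) π) :=
      Real.continuous_arctan.comp_continuousOn
        (ContinuousOn.div (Real.continuous_cos.continuousOn)
          (((continuous_const.mul Real.continuous_sin).add hrrc).continuousOn) hden)
    have hinn : Inn = fun x =>
        sin x * (3 - sin x ^ 2) * (π - x - 2 * arctan (cos x / (2 * sin x + rr x)))
            / (4 * (3 + sin x ^ 2) ^ 2 * rr x)
          + 3 * sin x * cos x / (8 * (3 + sin x ^ 2) ^ 2) := rfl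
    rw [hinn]
    apply ContinuousOn.add
    · apply ContinuousOn.div
      · exact ((by fun_prop : Continuous fun x => sin x * (3 - sin x ^ 2)).continuousOn).mul
          (((continuous_const.sub continuous_id).continuousOn).sub
            (harctan.const_smul (2:ℝ)))
      · exact ((continuous_const.mul
          ((continuous_const.add (Real.continuous_sin.pow 2)).pow 2)).mul hrrc).continuousOn
      · intro x _
        have h2 : 0 < rr x := rr_pos x
        have h3 : (0:ℝ) < 3 + sin x ^ 2 := by positivity
        positivity
    · apply Continuous.continuousOn
      apply Continuous.div
      · fun_prop
      · fun_prop
      · intro x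
        positivity
  rw [intervalIntegral.integral_eq_sub_of_hasDerivAt (fun x hx => by
    rw [Set.uIcc_of_le Real.pi_pos.le] at hx
    exact HH_deriv hx.1 hx.2) hInt]
  have h0 : rr 0 = Real.sqrt 3 := by unfold rr; norm_num
  have hpi' : rr π = Real.sqrt 3 := by unfold rr; simp
  have hs3 : (0:ℝ) < Real.sqrt 3 := Real.sqrt_pos.mpr (by norm_num)
  have hs3sq : Real.sqrt 3 ^ 2 = 3 := Real.sq_sqrt (by norm_num)
  unfold HH
  rw [h0, hpi', Real.sin_pi, Real.cos_pi, Real.sin_zero, Real.cos_zero]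
  rw [show (-1:ℝ) / (2 * 0 + Real.sqrt 3) = -(1 / (2 * 0 + Real.sqrt 3)) by ring,
    Real.arctan_neg]
  field_simp
  ring

private lemma f0_nonneg (x y : ℝ) : 0 ≤ f0 x y := by
  unfold f0; positivity

private lemma f0_le (x y : ℝ) : f0 x y ≤ 1 / 27 := by
  have key : ∀ a b c : ℝ, 0 ≤ a → 0 ≤ b → 0 ≤ c → a * b * c / (a + b + c) ^ 3 ≤ 1 / 27 := by
    intro a b c ha hb hc
    rcases eq_or_lt_of_le (by positivity : (0:ℝ) ≤ a + b + c) with h | h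
    · rw [← h]; norm_num
    · rw [div_le_div_iff₀ (by positivity) (by norm_num)]
      nlinarith [mul_nonneg hc (sq_nonneg (a - b)), mul_nonneg ha (sq_nonneg (b - c)),
        mul_nonneg hb (sq_nonneg (a - c)),
        mul_nonneg (add_nonneg (add_nonneg ha hb) hc) (sq_nonneg (a - b)),
        mul_nonneg (add_nonneg (add_nonneg ha hb) hc) (sq_nonneg (b - c)),
        mul_nonneg (add_nonneg (add_nonneg ha hb) hc) (sq_nonneg (a - c))]
  exact key _ _ _ (sq_nonneg _) (sq_nonneg _) (sq_nonneg _)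

private lemma key_integral :
    ∫ p in {p : ℝ × ℝ | 0 < p.1 ∧ p.1 < π ∧ 0 < p.2 ∧ p.2 < π ∧ p.1 + p.2 < π},
      f0 p.1 p.2 = π / (24 * Real.sqrt 3) := by
  set S := {p : ℝ × ℝ | 0 < p.1 ∧ p.1 < π ∧ 0 < p.2 ∧ p.2 < π ∧ p.1 + p.2 < π} with hSdef
  have hSm : MeasurableSet S := by
    apply MeasurableSet.inter
    · exact measurableSet_lt measurable_const measurable_fst
    apply MeasurableSet.inter
    · exact measurableSet_lt measurable_fst measurable_const
    apply MeasurableSet.inter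
    · exact measurableSet_lt measurable_const measurable_snd
    apply MeasurableSet.inter
    · exact measurableSet_lt measurable_snd measurable_const
    · exact measurableSet_lt (measurable_fst.add measurable_snd) measurable_const
  have hmeas : Measurable (fun p : ℝ × ℝ => f0 p.1 p.2) := by
    unfold f0
    apply Measurable.div <;> fun_prop
  have hbound : ∀ p : ℝ × ℝ, ‖f0 p.1 p.2‖ ≤ 1 / 27 := by
    intro p
    rw [Real.norm_eq_abs, abs_of_nonneg (f0_nonneg _ _)]
    exact f0_le _ _
  have hsub : S ⊆ Set.Ioo (0:ℝ) π ×ˢ Set.Ioo (0:ℝ) π := fun p hp =>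
    ⟨⟨hp.1, hp.2.1⟩, ⟨hp.2.2.1, hp.2.2.2.1⟩⟩
  have hfin : volume S ≠ ⊤ := by
    refine ne_top_of_le_ne_top ?_ (measure_mono hsub)
    rw [Measure.volume_eq_prod, Measure.prod_prod, Real.volume_Ioo]
    exact (ENNReal.mul_lt_top ENNReal.ofReal_lt_top ENNReal.ofReal_lt_top).ne
  have hio : IntegrableOn (fun p : ℝ × ℝ => f0 p.1 p.2) S := by
    exact Measure.integrableOn_of_bounded hfin hmeas.aestronglyMeasurable
      (ae_of_all _ fun p => hbound p)
  have hInd : Integrable (S.indicator fun p : ℝ × ℝ => f0 p.1 p.2) (volume.prod volume) := by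
    rw [← Measure.volume_eq_prod]
    exact (integrable_indicator_iff hSm).2 hio
  rw [← integral_indicator hSm, Measure.volume_eq_prod, integral_prod _ hInd]
  have hsame : ∀ x : ℝ, (∫ y, S.indicator (fun p : ℝ × ℝ => f0 p.1 p.2) (x, y))
      = (Set.Ioo 0 π).indicator (fun x => ∫ y in Set.Ioo 0 (π - x), f0 x y) x := by
    intro x
    by_cases hx : x ∈ Set.Ioo (0:ℝ) π
    · rw [Set.indicator_of_mem hx]
      have hpt : ∀ y : ℝ, S.indicator (fun p : ℝ × ℝ => f0 p.1 p.2) (x, y)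
          = (Set.Ioo 0 (π - x)).indicator (fun y => f0 x y) y := by
        intro y
        by_cases hy : y ∈ Set.Ioo (0:ℝ) (π - x)
        · rw [Set.indicator_of_mem hy, Set.indicator_of_mem]
          exact ⟨hx.1, hx.2, hy.1, by
            have := hy.2; have := hx.1; constructor <;> [linarith; linarith]⟩
        · rw [Set.indicator_of_notMem hy, Set.indicator_of_notMem]
          intro hmem
          exact hy ⟨hmem.2.2.1, by have := hmem.2.2.2.2; linarith⟩
      rw [integral_congr_ae (Filter.Eventually.of_forall hpt),
        integral_indicator measurableSet_Ioo]
    · rw [Set.indicator_of_notMem hx]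
      have hpt : ∀ y : ℝ, S.indicator (fun p : ℝ × ℝ => f0 p.1 p.2) (x, y) = 0 := by
        intro y
        apply Set.indicator_of_notMem
        intro hmem
        exact hx ⟨hmem.1, hmem.2.1⟩
      rw [integral_congr_ae (Filter.Eventually.of_forall hpt), integral_zero]
  rw [integral_congr_ae (Filter.Eventually.of_forall hsame),
    integral_indicator measurableSet_Ioo]
  rw [setIntegral_congr_fun measurableSet_Ioo (g := Inn) (fun x hx => by
    have hle : (0:ℝ) ≤ π - x := by linarith [hx.2]
    rw [← integral_Ioc_eq_integral_Ioo, ← intervalIntegral.integral_of_le hle]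
    exact inner_val hx.1 hx.2)]
  rw [← integral_Ioc_eq_integral_Ioo, ← intervalIntegral.integral_of_le Real.pi_pos.le]
  exact outer_val

end AngleDensityAux

/-- The bivariate angle density for triangles with `a²+b²+c²=1` integrates to 1. -/
theorem angle_density_sum_squares_integrates_to_one :
    ∫ p in {p : ℝ × ℝ | 0 < p.1 ∧ p.1 < π ∧ 0 < p.2 ∧ p.2 < π ∧ p.1 + p.2 < π},
      (24 * Real.sqrt 3 / π) * sin p.1 ^ 2 * sin p.2 ^ 2 * sin (p.1 + p.2) ^ 2 /
        (sin p.1 ^ 2 + sin p.2 ^ 2 + sin (p.1 + p.2) ^ 2) ^ 3 = 1 := by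
  have hSm : MeasurableSet {p : ℝ × ℝ | 0 < p.1 ∧ p.1 < π ∧ 0 < p.2 ∧ p.2 < π ∧ p.1 + p.2 < π} := by
    apply MeasurableSet.inter
    · exact measurableSet_lt measurable_const measurable_fst
    apply MeasurableSet.inter
    · exact measurableSet_lt measurable_fst measurable_const
    apply MeasurableSet.inter
    · exact measurableSet_lt measurable_const measurable_snd
    apply MeasurableSet.inter
    · exact measurableSet_lt measurable_snd measurable_const
    · exact measurableSet_lt (measurable_fst.add measurable_snd) measurable_const
  have hcongr : ∀ p : ℝ × ℝ,
      (24 * Real.sqrt 3 / π) * sin p.1 ^ 2 * sin p.2 ^ 2 * sin (p.1 + p.2) ^ 2 /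
        (sin p.1 ^ 2 + sin p.2 ^ 2 + sin (p.1 + p.2) ^ 2) ^ 3
      = (24 * Real.sqrt 3 / π) * f0 p.1 p.2 := by
    intro p; unfold f0; ring
  rw [setIntegral_congr_fun hSm (fun p _ => hcongr p), integral_const_mul, key_integral]
  have hpi : π ≠ 0 := Real.pi_ne_zero
  have h3 : Real.sqrt 3 ≠ 0 := by positivity
  field_simp
end

section
/- For the density f(a) = (12√3/π)·a²·√(2-3a²) on (0, √6/3) (0 elsewhere): ∫ f = 1, ∫ a·f(a) da = 32√6/(45π), and ∫ a²·f(a) da = 1/3. -/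
open MeasureTheory Real intervalIntegral

noncomputable def R0 : ℝ := Real.sqrt 6 / 3

lemma sqrt6_sq : Real.sqrt 6 * Real.sqrt 6 = 6 := Real.mul_self_sqrt (by norm_num)

lemma R0_pos : 0 < R0 := by
  have : 0 < Real.sqrt 6 := Real.sqrt_pos.mpr (by norm_num)
  unfold R0; linarith

lemma R0_sq : 2 - 3 * R0 ^ 2 = 0 := by
  unfold R0; field_simp; nlinarith [sqrt6_sq]

lemma key236 : Real.sqrt 3 * Real.sqrt 2 * Real.sqrt 6 = 6 := by
  rw [← Real.sqrt_mul (by norm_num) 2]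
  norm_num

lemma hu_pos {x : ℝ} (hx : x ∈ Set.Ioo 0 R0) : 0 < 2 - 3 * x ^ 2 := by
  obtain ⟨h0, h1⟩ := hx
  have h6 : (0:ℝ) ≤ Real.sqrt 6 := Real.sqrt_nonneg 6
  unfold R0 at h1
  nlinarith [sqrt6_sq]

lemma inner_deriv_s8 (x : ℝ) : HasDerivAt (fun a : ℝ => 2 - 3 * a ^ 2) (-6 * x) x := by
  have h : HasDerivAt (fun a : ℝ => 2 - 3 * a ^ 2) (0 - 3 * (2 * x ^ 1)) x :=
    (hasDerivAt_const x 2).sub (((hasDerivAt_pow 2 x)).const_mul 3)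
  convert h using 1
  ring

lemma sqrt_deriv {x : ℝ} (hu : 0 < 2 - 3 * x ^ 2) :
    HasDerivAt (fun a : ℝ => Real.sqrt (2 - 3 * a ^ 2))
      (-3 * x / Real.sqrt (2 - 3 * x ^ 2)) x := by
  have h := (Real.hasDerivAt_sqrt (ne_of_gt hu)).comp x (inner_deriv_s8 x)
  refine h.congr_deriv ?_
  symm
  field_simp
  ring

lemma arcsin_deriv {x : ℝ} (hx : x ∈ Set.Ioo 0 R0) :
    HasDerivAt (fun a : ℝ => Real.arcsin (Real.sqrt 6 / 2 * a))
      (Real.sqrt 3 / Real.sqrt (2 - 3 * x ^ 2)) x := by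
  have hu := hu_pos hx
  obtain ⟨h0, h1⟩ := hx
  have h6 : (0:ℝ) < Real.sqrt 6 := Real.sqrt_pos.mpr (by norm_num)
  have harg1 : Real.sqrt 6 / 2 * x < 1 := by
    unfold R0 at h1; nlinarith [sqrt6_sq]
  have harg0 : 0 < Real.sqrt 6 / 2 * x := by positivity
  have hin : HasDerivAt (fun a : ℝ => Real.sqrt 6 / 2 * a) (Real.sqrt 6 / 2) x := by
    simpa using (hasDerivAt_id x).const_mul (Real.sqrt 6 / 2)
  have h := (Real.hasDerivAt_arcsin (by linarith) (ne_of_lt harg1)).comp x hin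
  refine h.congr_deriv ?_
  symm
  have hrw : 1 - (Real.sqrt 6 / 2 * x) ^ 2 = (2 - 3 * x ^ 2) / 2 := by
    nlinarith [sqrt6_sq]
  rw [hrw, Real.sqrt_div hu.le]
  have h2 : (0:ℝ) < Real.sqrt 2 := Real.sqrt_pos.mpr (by norm_num)
  have hs : (0:ℝ) < Real.sqrt (2 - 3 * x ^ 2) := Real.sqrt_pos.mpr hu
  have h26 : Real.sqrt 2 * Real.sqrt 6 = 2 * Real.sqrt 3 := by
    rw [← Real.sqrt_mul (by norm_num) 6, show (2:ℝ)*6 = 2^2*3 by norm_num,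
      Real.sqrt_mul (by positivity) 3, Real.sqrt_sq (by norm_num)]
  field_simp
  linear_combination -h26

noncomputable def F2 : ℝ → ℝ := fun a =>
  Real.sqrt 3 / 18 * Real.arcsin (Real.sqrt 6 / 2 * a) +
    (a ^ 3 / 4 - a / 12) * Real.sqrt (2 - 3 * a ^ 2)

noncomputable def F3 : ℝ → ℝ := fun a =>
  (-(2 / 27) * (2 - 3 * a ^ 2) + (2 - 3 * a ^ 2) ^ 2 / 45) * Real.sqrt (2 - 3 * a ^ 2)

noncomputable def F4 : ℝ → ℝ := fun a =>
  Real.sqrt 3 / 54 * Real.arcsin (Real.sqrt 6 / 2 * a) +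
    (a ^ 5 / 6 - a ^ 3 / 36 - a / 36) * Real.sqrt (2 - 3 * a ^ 2)

lemma F2_deriv {x : ℝ} (hx : x ∈ Set.Ioo 0 R0) :
    HasDerivAt F2 (x ^ 2 * Real.sqrt (2 - 3 * x ^ 2)) x := by
  have hu := hu_pos hx
  have hs : (0:ℝ) < Real.sqrt (2 - 3 * x ^ 2) := Real.sqrt_pos.mpr hu
  have hs2 : Real.sqrt (2 - 3 * x ^ 2) ^ 2 = 2 - 3 * x ^ 2 := Real.sq_sqrt hu.le
  have hpoly : HasDerivAt (fun a : ℝ => a ^ 3 / 4 - a / 12) (3 * x ^ 2 / 4 - 1 / 12) x := by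
    have h := ((hasDerivAt_pow 3 x).div_const 4).sub ((hasDerivAt_id x).div_const 12)
    exact h.congr_deriv (by norm_num)
  have h := (((arcsin_deriv hx).const_mul (Real.sqrt 3 / 18)).add
    (hpoly.mul (sqrt_deriv hu)))
  refine h.congr_deriv ?_
  symm
  set s := Real.sqrt (2 - 3 * x ^ 2) with hsdef
  have h3 : Real.sqrt 3 * Real.sqrt 3 = 3 := Real.mul_self_sqrt (by norm_num)
  have h3' : Real.sqrt 3 ^ 2 = 3 := Real.sq_sqrt (by norm_num)
  field_simp
  linear_combination (216 * x ^ 2 + 72) * hs2 - 48 * h3'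

lemma F3_deriv {x : ℝ} (hx : x ∈ Set.Ioo 0 R0) :
    HasDerivAt F3 (x ^ 3 * Real.sqrt (2 - 3 * x ^ 2)) x := by
  have hu := hu_pos hx
  have hs : (0:ℝ) < Real.sqrt (2 - 3 * x ^ 2) := Real.sqrt_pos.mpr hu
  have hs2 : Real.sqrt (2 - 3 * x ^ 2) ^ 2 = 2 - 3 * x ^ 2 := Real.sq_sqrt hu.le
  have hpoly : HasDerivAt (fun a : ℝ => -(2 / 27) * (2 - 3 * a ^ 2) + (2 - 3 * a ^ 2) ^ 2 / 45)
      (-(2 / 27) * (-6 * x) + 2 * (2 - 3 * x ^ 2) * (-6 * x) / 45) x := by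
    have h1 := (inner_deriv_s8 x).const_mul (-(2/27) : ℝ)
    have h2 := (((inner_deriv_s8 x).pow 2).div_const 45)
    have := h1.add h2
    refine this.congr_deriv ?_
    ring
  have h := hpoly.mul (sqrt_deriv hu)
  refine h.congr_deriv ?_
  symm
  set s := Real.sqrt (2 - 3 * x ^ 2) with hsdef
  field_simp
  linear_combination (243 * x ^ 3 + 108 * x) * hs2

lemma F4_deriv {x : ℝ} (hx : x ∈ Set.Ioo 0 R0) :
    HasDerivAt F4 (x ^ 4 * Real.sqrt (2 - 3 * x ^ 2)) x := by
  have hu := hu_pos hx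
  have hs : (0:ℝ) < Real.sqrt (2 - 3 * x ^ 2) := Real.sqrt_pos.mpr hu
  have hs2 : Real.sqrt (2 - 3 * x ^ 2) ^ 2 = 2 - 3 * x ^ 2 := Real.sq_sqrt hu.le
  have hpoly : HasDerivAt (fun a : ℝ => a ^ 5 / 6 - a ^ 3 / 36 - a / 36)
      (5 * x ^ 4 / 6 - 3 * x ^ 2 / 36 - 1 / 36) x := by
    have h := (((hasDerivAt_pow 5 x).div_const 6).sub ((hasDerivAt_pow 3 x).div_const 36)).sub
      ((hasDerivAt_id x).div_const 36)
    exact h.congr_deriv (by norm_num)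
  have h := (((arcsin_deriv hx).const_mul (Real.sqrt 3 / 54)).add
    (hpoly.mul (sqrt_deriv hu)))
  refine h.congr_deriv ?_
  symm
  set s := Real.sqrt (2 - 3 * x ^ 2) with hsdef
  have h3 : Real.sqrt 3 * Real.sqrt 3 = 3 := Real.mul_self_sqrt (by norm_num)
  have h3' : Real.sqrt 3 ^ 2 = 3 := Real.sq_sqrt (by norm_num)
  field_simp
  linear_combination (1944 * x ^ 4 + 972 * x ^ 2 + 324) * hs2 - 216 * h3'

lemma cont_integrand (n : ℕ) :
    Continuous (fun a : ℝ => a ^ n * Real.sqrt (2 - 3 * a ^ 2)) := by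
  fun_prop

lemma F2_cont : ContinuousOn F2 (Set.Icc 0 R0) := by
  apply Continuous.continuousOn
  unfold F2
  exact (continuous_const.mul (Real.continuous_arcsin.comp (by fun_prop))).add
    ((by fun_prop : Continuous fun a : ℝ => a ^ 3 / 4 - a / 12).mul
      (Real.continuous_sqrt.comp (by fun_prop)))

lemma F3_cont : ContinuousOn F3 (Set.Icc 0 R0) := by
  apply Continuous.continuousOn
  unfold F3
  fun_prop

lemma F4_cont : ContinuousOn F4 (Set.Icc 0 R0) := by
  apply Continuous.continuousOn
  unfold F4
  exact (continuous_const.mul (Real.continuous_arcsin.comp (by fun_prop))).add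
    ((by fun_prop : Continuous fun a : ℝ => a ^ 5 / 6 - a ^ 3 / 36 - a / 36).mul
      (Real.continuous_sqrt.comp (by fun_prop)))

lemma arcsin_at_R0 : Real.arcsin (Real.sqrt 6 / 2 * R0) = π / 2 := by
  have : Real.sqrt 6 / 2 * R0 = 1 := by
    unfold R0; field_simp; nlinarith [sqrt6_sq]
  rw [this, Real.arcsin_one]

lemma sqrt_at_R0 : Real.sqrt (2 - 3 * R0 ^ 2) = 0 := by
  rw [R0_sq, Real.sqrt_zero]

lemma I2 : (∫ a in (0:ℝ)..R0, a ^ 2 * Real.sqrt (2 - 3 * a ^ 2))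
    = Real.sqrt 3 * π / 36 := by
  have h := intervalIntegral.integral_eq_sub_of_hasDeriv_right_of_le R0_pos.le F2_cont
    (fun x hx => (F2_deriv hx).hasDerivWithinAt)
    ((cont_integrand 2).intervalIntegrable 0 R0)
  rw [h]
  unfold F2
  rw [arcsin_at_R0, sqrt_at_R0]
  simp [Real.arcsin_zero]
  ring

lemma I3 : (∫ a in (0:ℝ)..R0, a ^ 3 * Real.sqrt (2 - 3 * a ^ 2))
    = 8 * Real.sqrt 2 / 135 := by
  have h := intervalIntegral.integral_eq_sub_of_hasDeriv_right_of_le R0_pos.le F3_cont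
    (fun x hx => (F3_deriv hx).hasDerivWithinAt)
    ((cont_integrand 3).intervalIntegrable 0 R0)
  rw [h]
  unfold F3
  rw [R0_sq]
  norm_num
  ring

lemma I4 : (∫ a in (0:ℝ)..R0, a ^ 4 * Real.sqrt (2 - 3 * a ^ 2))
    = Real.sqrt 3 * π / 108 := by
  have h := intervalIntegral.integral_eq_sub_of_hasDeriv_right_of_le R0_pos.le F4_cont
    (fun x hx => (F4_deriv hx).hasDerivWithinAt)
    ((cont_integrand 4).intervalIntegrable 0 R0)
  rw [h]
  unfold F4
  rw [arcsin_at_R0, sqrt_at_R0]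
  simp [Real.arcsin_zero]
  ring

/-- The side density `f(a) = (12√3/π)·a²·√(2-3a²)` on `(0, √6/3)` integrates to 1,
with mean `32√6/(45π)` and second moment `1/3`. -/
theorem side_density_sum_squares_moments :
    (∫ a in (0:ℝ)..(Real.sqrt 6 / 3),
        (12 * Real.sqrt 3 / π) * a ^ 2 * Real.sqrt (2 - 3 * a ^ 2)) = 1 ∧
    (∫ a in (0:ℝ)..(Real.sqrt 6 / 3),
        a * ((12 * Real.sqrt 3 / π) * a ^ 2 * Real.sqrt (2 - 3 * a ^ 2)))
      = 32 * Real.sqrt 6 / (45 * π) ∧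
    (∫ a in (0:ℝ)..(Real.sqrt 6 / 3),
        a ^ 2 * ((12 * Real.sqrt 3 / π) * a ^ 2 * Real.sqrt (2 - 3 * a ^ 2)))
      = 1/3 := by
  have hpi : π ≠ 0 := Real.pi_ne_zero
  have h3 : Real.sqrt 3 * Real.sqrt 3 = 3 := Real.mul_self_sqrt (by norm_num)
  have h32 : Real.sqrt 3 * Real.sqrt 2 = Real.sqrt 6 := by
    rw [← Real.sqrt_mul (by norm_num) 2]; norm_num
  refine ⟨?_, ?_, ?_⟩
  · have e : ∀ a : ℝ, (12 * Real.sqrt 3 / π) * a ^ 2 * Real.sqrt (2 - 3 * a ^ 2)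
        = (12 * Real.sqrt 3 / π) * (a ^ 2 * Real.sqrt (2 - 3 * a ^ 2)) := fun a => by ring
    simp only [e]
    rw [intervalIntegral.integral_const_mul, show Real.sqrt 6 / 3 = R0 from rfl, I2]
    field_simp
    linear_combination 12 * h3
  · have e : ∀ a : ℝ, a * ((12 * Real.sqrt 3 / π) * a ^ 2 * Real.sqrt (2 - 3 * a ^ 2))
        = (12 * Real.sqrt 3 / π) * (a ^ 3 * Real.sqrt (2 - 3 * a ^ 2)) := fun a => by ring
    simp only [e]
    rw [intervalIntegral.integral_const_mul, show Real.sqrt 6 / 3 = R0 from rfl, I3]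
    field_simp
    linear_combination 4320 * h32
  · have e : ∀ a : ℝ, a ^ 2 * ((12 * Real.sqrt 3 / π) * a ^ 2 * Real.sqrt (2 - 3 * a ^ 2))
        = (12 * Real.sqrt 3 / π) * (a ^ 4 * Real.sqrt (2 - 3 * a ^ 2)) := fun a => by ring
    simp only [e]
    rw [intervalIntegral.integral_const_mul, show Real.sqrt 6 / 3 = R0 from rfl, I4]
    field_simp
    linear_combination 36 * h3
end

section
/- The integral over the triangle {(x,y) : 0<x<π, 0<y<π, x+y<π} of (1/π)·sin(x+y)/(sin(x)+sin(y))² equals 1. -/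
open MeasureTheory Real Set

namespace AngleDensityAux

/-- The shear transform `(x, z) ↦ (x, z - x)`. -/
def shear : ℝ × ℝ ≃ᵐ ℝ × ℝ :=
{ toFun := fun q => (q.1, q.2 - q.1)
  invFun := fun q => (q.1, q.2 + q.1)
  left_inv := fun q => by simp
  right_inv := fun q => by simp
  measurable_toFun := measurable_fst.prodMk (measurable_snd.sub measurable_fst)
  measurable_invFun := measurable_fst.prodMk (measurable_snd.add measurable_fst) }

lemma sin_add_sin' (x y : ℝ) :
    Real.sin x + Real.sin y = 2 * Real.sin ((x + y) / 2) * Real.cos ((x - y) / 2) := by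
  have h1 := Real.sin_add ((x + y) / 2) ((x - y) / 2)
  have h2 := Real.sin_sub ((x + y) / 2) ((x - y) / 2)
  rw [show (x + y) / 2 + (x - y) / 2 = x by ring] at h1
  rw [show (x + y) / 2 - (x - y) / 2 = y by ring] at h2
  rw [h1, h2]; ring

lemma shear_mp : MeasurePreserving shear (volume : Measure (ℝ × ℝ)) volume := by
  rw [Measure.volume_eq_prod]
  have h := MeasurePreserving.skew_product (f := (id : ℝ → ℝ))
    (MeasurePreserving.id (volume : Measure ℝ)) (g := fun a c => c - a)
    (measurable_snd.sub measurable_fst)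
    (Filter.Eventually.of_forall fun a => (measurePreserving_sub_right volume a).map_eq)
  exact h

/-- The transformed density. -/
noncomputable def g : ℝ × ℝ → ℝ :=
  fun q => (1 / π) * Real.sin q.2 / (Real.sin q.1 + Real.sin (q.2 - q.1)) ^ 2

/-- The transformed region. -/
def Δ : Set (ℝ × ℝ) := {q | 0 < q.1 ∧ q.1 < q.2 ∧ q.2 < π}

lemma measurableSet_Δ : MeasurableSet Δ := by
  have h1 : MeasurableSet {q : ℝ × ℝ | 0 < q.1} := measurableSet_lt measurable_const measurable_fst
  have h2 : MeasurableSet {q : ℝ × ℝ | q.1 < q.2} := measurableSet_lt measurable_fst measurable_snd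
  have h3 : MeasurableSet {q : ℝ × ℝ | q.2 < π} := measurableSet_lt measurable_snd measurable_const
  exact (h1.inter (h2.inter h3))

lemma measurable_g : Measurable g := by
  unfold g
  fun_prop

lemma denom_pos {z x : ℝ} (hz0 : 0 < z) (hzπ : z < π) (hx : x ∈ Icc 0 z) :
    0 < Real.sin x + Real.sin (z - x) := by
  obtain ⟨hx0, hxz⟩ := hx
  have hπ := pi_pos
  have h1 : 0 < Real.sin (z / 2) := sin_pos_of_pos_of_lt_pi (by linarith) (by linarith)
  have h2 : 0 < Real.cos (x - z / 2) := by
    apply cos_pos_of_mem_Ioo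
    constructor <;> linarith
  rw [sin_add_sin']
  have e1 : (x + (z - x)) / 2 = z / 2 := by ring
  have e2 : (x - (z - x)) / 2 = x - z / 2 := by ring
  rw [e1, e2]
  positivity

lemma core {z : ℝ} (hz0 : 0 < z) (hzπ : z < π) :
    ∫ x in (0:ℝ)..z, Real.sin z / (Real.sin x + Real.sin (z - x)) ^ 2 = 1 := by
  have hπ := pi_pos
  have hs : 0 < Real.sin (z / 2) := sin_pos_of_pos_of_lt_pi (by linarith) (by linarith)
  have hc : 0 < Real.cos (z / 2) :=
    cos_pos_of_mem_Ioo ⟨by linarith, by linarith⟩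
  set c : ℝ := Real.sin z / (4 * Real.sin (z / 2) ^ 2) with hc_def
  have hderiv : ∀ x ∈ Set.uIcc (0:ℝ) z,
      HasDerivAt (fun x => c * Real.tan (x - z / 2))
        (Real.sin z / (Real.sin x + Real.sin (z - x)) ^ 2) x := by
    intro x hx
    rw [Set.uIcc_of_le hz0.le] at hx
    obtain ⟨hx0, hxz⟩ := hx
    have hcx : 0 < Real.cos (x - z / 2) := by
      apply cos_pos_of_mem_Ioo
      constructor <;> linarith
    have h1 : HasDerivAt (fun x : ℝ => x - z / 2) 1 x := (hasDerivAt_id x).sub_const _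
    have h2 := (Real.hasDerivAt_tan hcx.ne').comp x h1
    have h3 := h2.const_mul c
    refine h3.congr_deriv ?_
    rw [sin_add_sin']
    have e1 : (x + (z - x)) / 2 = z / 2 := by ring
    have e2 : (x - (z - x)) / 2 = x - z / 2 := by ring
    rw [e1, e2, hc_def]
    field_simp
    ring
  have hint : IntervalIntegrable
      (fun x => Real.sin z / (Real.sin x + Real.sin (z - x)) ^ 2) volume 0 z := by
    apply ContinuousOn.intervalIntegrable
    apply ContinuousOn.div continuousOn_const
    · exact (Real.continuous_sin.add (Real.continuous_sin.comp (continuous_const.sub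
        continuous_id))).continuousOn.pow 2
    · intro x hx
      rw [Set.uIcc_of_le hz0.le] at hx
      exact pow_ne_zero 2 (denom_pos hz0 hzπ hx).ne'
  rw [intervalIntegral.integral_eq_sub_of_hasDerivAt hderiv hint]
  have e1 : z - z / 2 = z / 2 := by ring
  have e2 : (0:ℝ) - z / 2 = -(z / 2) := by ring
  rw [e1, e2, Real.tan_neg]
  have hsz : Real.sin z = 2 * Real.sin (z / 2) * Real.cos (z / 2) := by
    have := Real.sin_two_mul (z / 2)
    rw [show 2 * (z / 2) = z by ring] at this
    exact this
  rw [hc_def, Real.tan_eq_sin_div_cos, hsz]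
  field_simp
  ring

lemma inner_int {z : ℝ} (hz0 : 0 < z) (hzπ : z < π) :
    ∫ x in Ioo (0:ℝ) z, g (x, z) = 1 / π := by
  have h : ∫ x in Ioo (0:ℝ) z, g (x, z) = ∫ x in (0:ℝ)..z, g (x, z) := by
    rw [intervalIntegral.integral_of_le hz0.le, integral_Ioc_eq_integral_Ioo]
  rw [h]
  have : ∀ x : ℝ, g (x, z)
      = (1 / π) * (Real.sin z / (Real.sin x + Real.sin (z - x)) ^ 2) := by
    intro x; simp only [g]; ring
  simp only [this]
  rw [intervalIntegral.integral_const_mul, core hz0 hzπ, mul_one]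

lemma fiber_eq {z : ℝ} (hz : z < π) :
    (fun x => Δ.indicator g (x, z)) = (Ioo (0:ℝ) z).indicator (fun x => g (x, z)) := by
  funext x
  by_cases h : x ∈ Ioo (0:ℝ) z
  · rw [indicator_of_mem h, indicator_of_mem]
    exact ⟨h.1, h.2, hz⟩
  · rw [indicator_of_notMem h, indicator_of_notMem]
    intro hq
    exact h ⟨hq.1, hq.2.1⟩

lemma fiber_eq' {z : ℝ} (hz : π ≤ z) :
    (fun x => Δ.indicator g (x, z)) = fun _ => (0:ℝ) := by
  funext x
  rw [indicator_of_notMem]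
  rintro ⟨-, -, h⟩
  linarith

lemma g_nonneg {q : ℝ × ℝ} (hq : q ∈ Δ) : 0 ≤ g q := by
  obtain ⟨h1, h2, h3⟩ := hq
  have hπ := pi_pos
  apply div_nonneg
  · exact mul_nonneg (by positivity)
      (sin_nonneg_of_nonneg_of_le_pi (by linarith) (by linarith))
  · positivity

lemma ind_nonneg (q : ℝ × ℝ) : 0 ≤ Δ.indicator g q :=
  indicator_nonneg (fun q hq => g_nonneg hq) q

lemma fiber_integrable (z : ℝ) : Integrable (fun x => Δ.indicator g (x, z)) volume := by
  rcases lt_or_ge z π with hzπ | hzπ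
  · rw [fiber_eq hzπ]
    rw [integrable_indicator_iff measurableSet_Ioo]
    rcases le_or_gt z 0 with hz0 | hz0
    · rw [Ioo_eq_empty (by linarith)]
      exact integrableOn_empty
    · have hcont : ContinuousOn
          (fun x => (1 / π) * Real.sin z / (Real.sin x + Real.sin (z - x)) ^ 2) (Icc 0 z) := by
        apply ContinuousOn.div continuousOn_const
        · exact (Real.continuous_sin.add (Real.continuous_sin.comp (continuous_const.sub
            continuous_id))).continuousOn.pow 2
        · intro x hx
          exact pow_ne_zero 2 (denom_pos hz0 hzπ hx).ne'
      exact (hcont.integrableOn_Icc).mono_set Ioo_subset_Icc_self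
  · rw [fiber_eq' hzπ]
    exact integrable_zero _ _ _

lemma inner_val :
    (fun z => ∫ x, Δ.indicator g (x, z)) = (Ioo (0:ℝ) π).indicator (fun _ => 1 / π) := by
  funext z
  by_cases hz : z ∈ Ioo (0:ℝ) π
  · rw [indicator_of_mem hz, fiber_eq hz.2, integral_indicator measurableSet_Ioo,
      inner_int hz.1 hz.2]
  · rw [indicator_of_notMem hz]
    rw [mem_Ioo, not_and_or] at hz
    rcases hz with hz | hz
    · push_neg at hz
      rw [fiber_eq (lt_of_le_of_lt hz pi_pos), Ioo_eq_empty (by simpa using hz),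
        indicator_empty, integral_zero]
    · push_neg at hz
      rw [fiber_eq' hz, integral_zero]

lemma ind_integrable : Integrable (Δ.indicator g) ((volume : Measure ℝ).prod volume) := by
  have hm : AEStronglyMeasurable (Δ.indicator g) ((volume : Measure ℝ).prod volume) :=
    ((measurable_g.indicator measurableSet_Δ).aestronglyMeasurable)
  rw [integrable_prod_iff' hm]
  constructor
  · exact Filter.Eventually.of_forall fiber_integrable
  · have hn : (fun z => ∫ x, ‖Δ.indicator g (x, z)‖)
        = (Ioo (0:ℝ) π).indicator (fun _ => 1 / π) := by
      rw [← inner_val]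
      funext z
      congr 1
      funext x
      exact Real.norm_of_nonneg (ind_nonneg _)
    rw [hn, integrable_indicator_iff measurableSet_Ioo]
    exact integrableOn_const measure_Ioo_lt_top.ne

lemma key : ∫ q in Δ, g q = 1 := by
  have hπ := pi_pos
  rw [← integral_indicator measurableSet_Δ]
  rw [Measure.volume_eq_prod]
  rw [integral_prod_symm _ ind_integrable]
  rw [inner_val, integral_indicator measurableSet_Ioo, setIntegral_const]
  rw [measureReal_def, Real.volume_Ioo, sub_zero, ENNReal.toReal_ofReal hπ.le, smul_eq_mul]
  field_simp

end AngleDensityAux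

open AngleDensityAux in
/-- The bivariate angle density for triangles with `a + b = 1` and uniform
included angle `γ` integrates to 1. -/
theorem angle_density_a_plus_b_integrates_to_one :
    ∫ p in {p : ℝ × ℝ | 0 < p.1 ∧ p.1 < π ∧ 0 < p.2 ∧ p.2 < π ∧ p.1 + p.2 < π},
      (1 / π) * sin (p.1 + p.2) / (sin p.1 + sin p.2) ^ 2 = 1 := by
  have hpre : shear ⁻¹' {p : ℝ × ℝ | 0 < p.1 ∧ p.1 < π ∧ 0 < p.2 ∧ p.2 < π ∧ p.1 + p.2 < π}
      = Δ := by
    ext ⟨x, z⟩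
    simp only [mem_preimage, mem_setOf_eq, Δ, shear, MeasurableEquiv.coe_mk, Equiv.coe_fn_mk]
    constructor
    · rintro ⟨h1, h2, h3, h4, h5⟩
      exact ⟨h1, by linarith, by linarith⟩
    · rintro ⟨h1, h2, h3⟩
      refine ⟨h1, by linarith, by linarith, by linarith, by linarith⟩
  rw [← shear_mp.setIntegral_preimage_emb shear.measurableEmbedding
    (fun p => (1 / π) * sin (p.1 + p.2) / (sin p.1 + sin p.2) ^ 2) _, hpre]
  refine Eq.trans (setIntegral_congr_fun measurableSet_Δ fun q _ => ?_) key
  simp only [shear, MeasurableEquiv.coe_mk, Equiv.coe_fn_mk, g]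
  rw [show q.1 + (q.2 - q.1) = q.2 by ring]
end
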